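/- arXiv:2203.02111 — 7 statements merged into one kernel-verified Lean document; each statement's English description precedes it below -/
import Mathlib

section
/- Let W ∈ ℝ^{N×N}, A ∈ ℝ^{n×n}, H ∈ ℝ^{n×m}, C ∈ ℝ^{m×n}, h > 0, and set Φ = I_N ⊗ e^{Ah} + W ⊗ 𝓗(h) ∈ ℝ^{Nn×Nn}. Then the set of complex eigenvalues of Φ equals the union, over all complex eigenvalues λ of W, of the sets of complex eigenvalues of the complex matrix e^{Ah} + λ·𝓗(h); that is, θ ∈ ℂ is an eigenvalue of Φ if and only if there exists an eigenvalue λ of W such that θ is an eigenvalue of e^{Ah} + λ·𝓗(h). -/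
open Matrix
open scoped Kronecker

/-- Matrix exponential of a real square matrix. -/
noncomputable def matExp {k : Type*} [Fintype k] [DecidableEq k]
    (A : Matrix k k ℝ) : Matrix k k ℝ := NormedSpace.exp A

/-- Entrywise integral `∫₀ʰ e^{Aτ} dτ`. -/
noncomputable def intExp {k : Type*} [Fintype k] [DecidableEq k]
    (A : Matrix k k ℝ) (h : ℝ) : Matrix k k ℝ :=
  Matrix.of fun i j => ∫ τ in (0:ℝ)..h, matExp (τ • A) i j

/-- A real matrix regarded as a complex matrix entrywise. -/
def cmap {a b : Type*} (M : Matrix a b ℝ) : Matrix a b ℂ := M.map Complex.ofReal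

/-- `θ` is a (complex) eigenvalue of the complex matrix `M`. -/
def IsEig {k : Type*} [Fintype k] (M : Matrix k k ℂ) (θ : ℂ) : Prop :=
  ∃ v : k → ℂ, v ≠ 0 ∧ M.mulVec v = θ • v

/-- Controllability of the discrete-time linear system `x(k+1) = F x(k) + G u(k)`:
every target state can be reached from every initial state in finite time. -/
def Controllable {q r : Type*} [Fintype q] [Fintype r]
    (F : Matrix q q ℝ) (G : Matrix q r ℝ) : Prop :=
  ∀ x₀ xf : q → ℝ, ∃ (T : ℕ) (u : ℕ → r → ℝ) (x : ℕ → q → ℝ),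
    x 0 = x₀ ∧ (∀ k, x (k + 1) = F.mulVec (x k) + G.mulVec (u k)) ∧ x T = xf

lemma cmap_add {a b : Type*} (M N : Matrix a b ℝ) : cmap (M + N) = cmap M + cmap N := by
  ext i j; simp [cmap]

lemma cmap_kron {a b c d : Type*} (M : Matrix a b ℝ) (P : Matrix c d ℝ) :
    cmap (M ⊗ₖ P) = cmap M ⊗ₖ cmap P := by
  ext ⟨i, j⟩ ⟨k, l⟩; simp [cmap, Matrix.kroneckerMap_apply]

lemma cmap_one {a : Type*} [Fintype a] [DecidableEq a] :
    cmap (1 : Matrix a a ℝ) = 1 := by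
  ext i j; by_cases hij : i = j <;> simp [cmap, Matrix.one_apply, hij]

lemma isEig_iff_det {k : Type*} [Fintype k] [DecidableEq k] (M : Matrix k k ℂ) (θ : ℂ) :
    IsEig M θ ↔ (M - θ • 1).det = 0 := by
  rw [← Matrix.exists_mulVec_eq_zero_iff]
  constructor
  · rintro ⟨v, hv, he⟩
    exact ⟨v, hv, by rw [Matrix.sub_mulVec, Matrix.smul_mulVec, Matrix.one_mulVec, he,
      sub_self]⟩
  · rintro ⟨v, hv, he⟩
    refine ⟨v, hv, ?_⟩
    rwa [Matrix.sub_mulVec, Matrix.smul_mulVec, Matrix.one_mulVec, sub_eq_zero] at he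

lemma isEig_transpose {k : Type*} [Fintype k] [DecidableEq k] (M : Matrix k k ℂ) (θ : ℂ) :
    IsEig Mᵀ θ ↔ IsEig M θ := by
  rw [isEig_iff_det, isEig_iff_det]
  have : Mᵀ - θ • 1 = (M - θ • 1)ᵀ := by
    rw [Matrix.transpose_sub, Matrix.transpose_smul, Matrix.transpose_one]
  rw [this, Matrix.det_transpose]

lemma kron_mulVec {a b : Type*} [Fintype a] [Fintype b]
    (P : Matrix a a ℂ) (Q : Matrix b b ℂ) (x : a × b → ℂ) (i : a) (j : b) :
    (P ⊗ₖ Q).mulVec x (i, j) = ∑ k, ∑ l, P i k * Q j l * x (k, l) := by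
  rw [Matrix.mulVec, dotProduct, Fintype.sum_prod_type]
  simp [Matrix.kroneckerMap_apply]

/-- the spectrum of `Φ = I_N ⊗ e^{Ah} + W ⊗ 𝓗(h)` is the union over the
eigenvalues `λ` of `W` of the spectra of `e^{Ah} + λ·𝓗(h)`. -/
theorem eigenvalues_of_singleLayer_sampled
    (N n m : ℕ) (W : Matrix (Fin N) (Fin N) ℝ)
    (A : Matrix (Fin n) (Fin n) ℝ) (H : Matrix (Fin n) (Fin m) ℝ)
    (C : Matrix (Fin m) (Fin n) ℝ) (h : ℝ) (hh : 0 < h)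
    (Φ : Matrix (Fin N × Fin n) (Fin N × Fin n) ℝ)
    (hΦ : Φ = (1 : Matrix (Fin N) (Fin N) ℝ) ⊗ₖ matExp (h • A)
        + W ⊗ₖ (intExp A h * H * C))
    (θ : ℂ) :
    IsEig (cmap Φ) θ ↔
      ∃ μ : ℂ, IsEig (cmap W) μ ∧
        IsEig (cmap (matExp (h • A)) + μ • cmap (intExp A h * H * C)) θ := by
  set E : Matrix (Fin n) (Fin n) ℂ := cmap (matExp (h • A)) with hE
  set K : Matrix (Fin n) (Fin n) ℂ := cmap (intExp A h * H * C) with hK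
  set cW : Matrix (Fin N) (Fin N) ℂ := cmap W with hcW
  have hΦc : cmap Φ = (1 : Matrix (Fin N) (Fin N) ℂ) ⊗ₖ E + cW ⊗ₖ K := by
    rw [hΦ, cmap_add, cmap_kron, cmap_kron, cmap_one]
  constructor
  · rintro ⟨x, hx0, hx⟩
    by_contra hcon
    push_neg at hcon
    -- componentwise equation
    set xr : Fin N → (Fin n → ℂ) := fun i j => x (i, j) with hxr
    have hxeq : ∀ i, E.mulVec (xr i) + K.mulVec (∑ k, cW i k • xr k) = θ • xr i := by
      intro i
      funext j
      have hx' : (cmap Φ).mulVec x (i, j) = θ * x (i, j) := by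
        rw [hx]; rfl
      rw [hΦc, Matrix.add_mulVec, Pi.add_apply, kron_mulVec, kron_mulVec] at hx'
      have h1 : ∑ k, ∑ l, (1 : Matrix (Fin N) (Fin N) ℂ) i k * E j l * x (k, l)
          = ∑ l, E j l * x (i, l) := by
        rw [Finset.sum_comm]
        refine Finset.sum_congr rfl fun l _ => ?_
        simp [Matrix.one_apply, ite_mul]
      have h2 : K.mulVec (∑ k, cW i k • xr k) j
          = ∑ k, ∑ l, cW i k * K j l * x (k, l) := by
        rw [Matrix.mulVec, dotProduct]
        rw [Finset.sum_comm]
        refine Finset.sum_congr rfl fun l _ => ?_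
        simp only [Finset.sum_apply, Pi.smul_apply, smul_eq_mul, Finset.mul_sum]
        refine Finset.sum_congr rfl fun k _ => ?_
        ring
      simp only [Pi.add_apply, Pi.smul_apply, smul_eq_mul]
      rw [h2]
      rw [h1] at hx'
      have h3 : E.mulVec (xr i) j = ∑ l, E j l * x (i, l) := by
        rw [Matrix.mulVec, dotProduct]
      rw [h3]
      exact hx'
    -- the linear map L
    set L : (Fin N → ℂ) →ₗ[ℂ] (Fin n → ℂ) :=
      { toFun := fun v => ∑ i, v i • xr i
        map_add' := by
          intro v w
          simp [add_smul, Finset.sum_add_distrib]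
        map_smul' := by
          intro c v
          simp [smul_smul, Finset.smul_sum] } with hL
    set Wt : Matrix (Fin N) (Fin N) ℂ := cWᵀ with hWt
    set f : Module.End ℂ (Fin N → ℂ) := Wt.mulVecLin with hf
    have key : ∀ v, E.mulVec (L v) + K.mulVec (L (f v)) = θ • L v := by
      intro v
      have h1 : E.mulVec (L v) = ∑ i, v i • E.mulVec (xr i) := by
        show E.mulVecLin (∑ i, v i • xr i) = _
        rw [map_sum]
        simp [Matrix.mulVecLin_apply]
      have h2 : L (f v) = ∑ i, v i • (∑ k, cW i k • xr k) := by
        show ∑ k, (Wt.mulVec v) k • xr k = _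
        have : ∀ k, (Wt.mulVec v) k • xr k = ∑ i, (v i * cW i k) • xr k := by
          intro k
          rw [Matrix.mulVec, dotProduct, ← Finset.sum_smul]
          congr 1
          refine Finset.sum_congr rfl fun i _ => ?_
          rw [hWt, Matrix.transpose_apply]; ring
        simp_rw [this]
        rw [Finset.sum_comm]
        refine Finset.sum_congr rfl fun i _ => ?_
        rw [Finset.smul_sum]
        refine Finset.sum_congr rfl fun k _ => ?_
        rw [smul_smul]
      have h3 : K.mulVec (L (f v)) = ∑ i, v i • K.mulVec (∑ k, cW i k • xr k) := by
        show K.mulVecLin (L (f v)) = _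
        rw [h2, map_sum]
        refine Finset.sum_congr rfl fun i _ => ?_
        rw [LinearMap.map_smul]
        rfl
      rw [h1, h3, ← Finset.sum_add_distrib]
      have h4 : ∀ i ∈ Finset.univ,
          v i • E.mulVec (xr i) + v i • K.mulVec (∑ k, cW i k • xr k)
            = v i • (θ • xr i) := by
        intro i _
        rw [← smul_add, hxeq i]
      rw [Finset.sum_congr rfl h4]
      show _ = θ • ∑ i, v i • xr i
      rw [Finset.smul_sum]
      exact Finset.sum_congr rfl fun i _ => smul_comm _ _ _
    -- L is nonzero
    have hL0 : L ≠ 0 := by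
      obtain ⟨⟨i, j⟩, hij⟩ := Function.ne_iff.mp hx0
      intro hL0
      apply hij
      have : L (Pi.single i 1) = xr i := by
        simp only [hL, LinearMap.coe_mk, AddHom.coe_mk]
        rw [Finset.sum_eq_single i]
        · simp
        · intro k _ hk; simp [Pi.single_eq_of_ne hk]
        · intro hi; exact absurd (Finset.mem_univ i) hi
      rw [hL0] at this
      have := congrFun this.symm j
      simpa using this
    -- every generalized eigenspace of f is in the kernel of L
    have hker : ∀ μ : ℂ, f.maxGenEigenspace μ ≤ LinearMap.ker L := by
      intro μ v hv
      rw [LinearMap.mem_ker]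
      by_cases hv0 : v = 0
      · simp [hv0]
      obtain ⟨k, hk⟩ := (Module.End.mem_maxGenEigenspace f μ v).mp hv
      -- μ is an eigenvalue of W
      have heigW : IsEig cW μ := by
        have hgen : v ∈ (f.genEigenspace μ) (k : ℕ∞) := by
          rw [Module.End.mem_genEigenspace]
          exact ⟨k, le_refl _, hk⟩
        have hne : (f.genEigenspace μ) (k : ℕ∞) ≠ ⊥ := by
          intro hbot
          rw [hbot, Submodule.mem_bot] at hgen
          exact hv0 hgen
        have hev : f.HasEigenvalue μ :=
          Module.End.hasEigenvalue_of_hasGenEigenvalue (k := k) hne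
        obtain ⟨u, hu⟩ := hev.exists_hasEigenvector
        have huv : f u = μ • u := Module.End.mem_eigenspace_iff.mp hu.1
        rw [← isEig_transpose]
        exact ⟨u, hu.2, huv⟩
      -- so E + μK - θ is invertible
      have hnot := hcon μ heigW
      rw [isEig_iff_det] at hnot
      set M : Matrix (Fin n) (Fin n) ℂ := E + μ • K - θ • 1 with hM
      have hMinv : M⁻¹ * M = 1 := Matrix.nonsing_inv_mul M (Ne.isUnit hnot)
      set Q : Matrix (Fin n) (Fin n) ℂ := -(M⁻¹ * K) with hQ
      set g : Module.End ℂ (Fin N → ℂ) := f - μ • 1 with hg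
      have step : ∀ w, L w = Q.mulVec (L (g w)) := by
        intro w
        have h1 : M.mulVec (L w) = -(K.mulVec (L (g w))) := by
          have hk' := key w
          have hgw : L (g w) = L (f w) - μ • L w := by
            rw [hg]; simp
          have h5 : K.mulVec (L (g w)) = K.mulVec (L (f w)) - μ • K.mulVec (L w) := by
            rw [hgw]
            show K.mulVecLin _ = _
            rw [map_sub, _root_.map_smul]
            rfl
          rw [hM, Matrix.sub_mulVec, Matrix.add_mulVec, Matrix.smul_mulVec,
            Matrix.smul_mulVec, Matrix.one_mulVec, h5]
          have h6 : E.mulVec (L w) = θ • L w - K.mulVec (L (f w)) := by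
            rw [← hk']; abel
          rw [h6]; abel
        calc L w = (M⁻¹ * M).mulVec (L w) := by rw [hMinv, Matrix.one_mulVec]
          _ = M⁻¹.mulVec (M.mulVec (L w)) := by rw [← Matrix.mulVec_mulVec]
          _ = M⁻¹.mulVec (-(K.mulVec (L (g w)))) := by rw [h1]
          _ = -(M⁻¹.mulVec (K.mulVec (L (g w)))) := by rw [Matrix.mulVec_neg]
          _ = -((M⁻¹ * K).mulVec (L (g w))) := by rw [Matrix.mulVec_mulVec]
          _ = Q.mulVec (L (g w)) := by rw [hQ, Matrix.neg_mulVec]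
      have iter : ∀ k : ℕ, ∀ w, L w = (Q ^ k).mulVec (L ((g ^ k) w)) := by
        intro k
        induction k with
        | zero => intro w; simp [Matrix.one_mulVec]
        | succ k ih =>
          intro w
          have hgw : (g ^ (k + 1)) w = (g ^ k) (g w) := by
            rw [pow_succ]; rfl
          rw [hgw, pow_succ', ← Matrix.mulVec_mulVec, ← ih (g w)]
          exact step w
      have := iter k v
      rw [show (g ^ k) v = 0 from hk] at this
      simpa using this
    -- contradiction
    have htop : (⊤ : Submodule ℂ (Fin N → ℂ)) ≤ LinearMap.ker L := by
      rw [← Module.End.iSup_maxGenEigenspace_eq_top f]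
      exact iSup_le hker
    exact hL0 (LinearMap.ker_eq_top.mp (top_le_iff.mp htop))
  · rintro ⟨μ, ⟨u, hu0, hu⟩, ⟨y, hy0, hy⟩⟩
    obtain ⟨i0, hi0⟩ := Function.ne_iff.mp hu0
    obtain ⟨j0, hj0⟩ := Function.ne_iff.mp hy0
    refine ⟨fun p => u p.1 * y p.2, ?_, ?_⟩
    · exact Function.ne_iff.mpr ⟨(i0, j0), by simpa using mul_ne_zero hi0 hj0⟩
    · funext ⟨i, j⟩
      rw [hΦc, Matrix.add_mulVec, Pi.add_apply, kron_mulVec, kron_mulVec]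
      have h1 : ∑ k, ∑ l, (1 : Matrix (Fin N) (Fin N) ℂ) i k * E j l * (u k * y l)
          = u i * E.mulVec y j := by
        rw [Finset.sum_comm, Matrix.mulVec, dotProduct, Finset.mul_sum]
        refine Finset.sum_congr rfl fun l _ => ?_
        simp [Matrix.one_apply, ite_mul]
        ring
      have h2 : ∑ k, ∑ l, cW i k * K j l * (u k * y l)
          = (cW.mulVec u i) * (K.mulVec y j) := by
        rw [Matrix.mulVec, Matrix.mulVec, dotProduct, dotProduct,
          Finset.sum_mul_sum]
        refine Finset.sum_congr rfl fun k _ => Finset.sum_congr rfl fun l _ => ?_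
        ring
      rw [h1, h2]
      have h3 : cW.mulVec u i = μ * u i := by
        rw [hu]; rfl
      have h4 : E.mulVec y j + μ * K.mulVec y j = θ * y j := by
        have := congrFun hy j
        simpa [Matrix.add_mulVec, Matrix.smul_mulVec] using this
      rw [h3]
      show u i * E.mulVec y j + μ * u i * (K.mulVec y j) = θ * (u i * y j)
      calc u i * E.mulVec y j + μ * u i * (K.mulVec y j)
          = u i * (E.mulVec y j + μ * K.mulVec y j) := by ring
        _ = u i * (θ * y j) := by rw [h4]
        _ = θ * (u i * y j) := by ring
end

section
/- Let W ∈ ℝ^{N×N}, A ∈ ℝ^{n×n}, H ∈ ℝ^{n×m}, C ∈ ℝ^{m×n}, h > 0, and Φ = I_N ⊗ e^{Ah} + W ⊗ 𝓗(h). Suppose λ, θ ∈ ℂ, v(1), …, v(α) ∈ ℂ^{1×N} is a left Jordan chain of W at λ (i.e., v(1)W = λ v(1) and v(k)W = λ v(k) + v(k−1) for k = 2, …, α), and ξ(1), …, ξ(γ) ∈ ℂ^{1×n} is a generalized left Jordan chain of E = e^{Ah} + λ·𝓗(h) about 𝓗(h) at θ (i.e., ξ(1)E = θ ξ(1) and ξ(k)E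 + ξ(k−1)𝓗(h) = θ ξ(k) for k = 2, …, γ). Then for every k with 1 ≤ k ≤ min(α, γ), the row vector η(k) = Σ_{l=1}^{k} v(l) ⊗ ξ(k+1−l) satisfies η(k)·Φ = θ·η(k); in particular every nonzero η(k) is a left eigenvector of Φ associated with θ. -/
open Matrix
open scoped Kronecker

/-- tensor (Kronecker) product of two row vectors -/
def tens {N n : ℕ} (a : Fin N → ℂ) (b : Fin n → ℂ) : Fin N × Fin n → ℂ :=
  fun q => a q.1 * b q.2

lemma tens_add_left {N n : ℕ} (a a' : Fin N → ℂ) (b : Fin n → ℂ) :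
    tens (a + a') b = tens a b + tens a' b := by
  funext q; simp [tens, add_mul]

lemma tens_smul_left {N n : ℕ} (c : ℂ) (a : Fin N → ℂ) (b : Fin n → ℂ) :
    tens (c • a) b = c • tens a b := by
  funext q; simp [tens, mul_assoc]

lemma tens_add_right {N n : ℕ} (a : Fin N → ℂ) (b b' : Fin n → ℂ) :
    tens a (b + b') = tens a b + tens a b' := by
  funext q; simp [tens, mul_add]

lemma tens_smul_right {N n : ℕ} (c : ℂ) (a : Fin N → ℂ) (b : Fin n → ℂ) :
    tens a (c • b) = c • tens a b := by
  funext q; simp [tens]; ring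

lemma tens_sub_right {N n : ℕ} (a : Fin N → ℂ) (b b' : Fin n → ℂ) :
    tens a (b - b') = tens a b - tens a b' := by
  funext q; simp [tens, mul_sub]

lemma tens_zero_left {N n : ℕ} (b : Fin n → ℂ) : tens (0 : Fin N → ℂ) b = 0 := by
  funext q; simp [tens]

lemma tens_zero_right {N n : ℕ} (a : Fin N → ℂ) : tens a (0 : Fin n → ℂ) = 0 := by
  funext q; simp [tens]

lemma tens_vecMul_kron {N n : ℕ} (a : Fin N → ℂ) (b : Fin n → ℂ)
    (M : Matrix (Fin N) (Fin N) ℂ) (P : Matrix (Fin n) (Fin n) ℂ) :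
    tens a b ᵥ* (M ⊗ₖ P) = tens (a ᵥ* M) (b ᵥ* P) := by
  funext j
  simp only [tens, Matrix.vecMul, dotProduct, Matrix.kroneckerMap_apply,
    Fintype.sum_prod_type, Finset.sum_mul, Finset.mul_sum]
  rw [Finset.sum_comm]
  exact Finset.sum_congr rfl fun i _ => Finset.sum_congr rfl fun i' _ => by ring

lemma sum_vecMul' {a b : Type*} [Fintype a] (s : Finset ℕ) (f : ℕ → a → ℂ)
    (M : Matrix a b ℂ) :
    (∑ l ∈ s, f l) ᵥ* M = ∑ l ∈ s, f l ᵥ* M := by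
  funext j
  simp [Matrix.vecMul, dotProduct, Finset.sum_apply, Finset.sum_mul]
  rw [Finset.sum_comm]

lemma vecMul_smul_mat {N n : ℕ} (x : Fin N → ℂ) (c : ℂ) (M : Matrix (Fin N) (Fin n) ℂ) :
    x ᵥ* (c • M) = c • (x ᵥ* M) := by
  funext j
  simp [Matrix.vecMul, dotProduct, Matrix.smul_apply, Finset.mul_sum, mul_left_comm]

lemma cmap_kron_add {N n : ℕ} (W : Matrix (Fin N) (Fin N) ℝ)
    (E S : Matrix (Fin n) (Fin n) ℝ) :
    cmap ((1 : Matrix (Fin N) (Fin N) ℝ) ⊗ₖ E + W ⊗ₖ S)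
      = (1 : Matrix (Fin N) (Fin N) ℂ) ⊗ₖ cmap E + cmap W ⊗ₖ cmap S := by
  ext q r
  simp [cmap, Matrix.add_apply, Matrix.kroneckerMap_apply, Matrix.one_apply, apply_ite]

/-- left Jordan chains of `W` combined with generalized left Jordan chains of
`E = e^{Ah} + λ𝓗(h)` about `𝓗(h)` produce left (generalized) eigenvectors of
`Φ = I_N ⊗ e^{Ah} + W ⊗ 𝓗(h)`. -/
theorem left_eigenvectors_of_singleLayer_sampled
    (N n m : ℕ) (W : Matrix (Fin N) (Fin N) ℝ)
    (A : Matrix (Fin n) (Fin n) ℝ) (H : Matrix (Fin n) (Fin m) ℝ)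
    (C : Matrix (Fin m) (Fin n) ℝ) (h : ℝ) (hh : 0 < h)
    (μ θ : ℂ) (α γ : ℕ)
    (v : ℕ → Fin N → ℂ) (ξ : ℕ → Fin n → ℂ)
    -- left Jordan chain of W at μ
    (hv1 : v 1 ᵥ* cmap W = μ • v 1)
    (hvk : ∀ k, 2 ≤ k → k ≤ α → v k ᵥ* cmap W = μ • v k + v (k - 1))
    -- generalized left Jordan chain of E = e^{Ah} + μ·𝓗(h) about 𝓗(h) at θ
    (hξ1 : ξ 1 ᵥ* (cmap (matExp (h • A)) + μ • cmap (intExp A h * H * C)) = θ • ξ 1)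
    (hξk : ∀ k, 2 ≤ k → k ≤ γ →
      ξ k ᵥ* (cmap (matExp (h • A)) + μ • cmap (intExp A h * H * C))
        + ξ (k - 1) ᵥ* cmap (intExp A h * H * C) = θ • ξ k)
    (η : ℕ → Fin N × Fin n → ℂ)
    (hη : ∀ k, η k = fun q => ∑ l ∈ Finset.Icc 1 k, v l q.1 * ξ (k + 1 - l) q.2) :
    ∀ k, 1 ≤ k → k ≤ min α γ →
      η k ᵥ* cmap ((1 : Matrix (Fin N) (Fin N) ℝ) ⊗ₖ matExp (h • A)
          + W ⊗ₖ (intExp A h * H * C)) = θ • η k := by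
  intro k hk1 hk
  set Ec := cmap (matExp (h • A)) with hEcdef
  set S := cmap (intExp A h * H * C) with hSdef
  have hkα : k ≤ α := le_trans hk (min_le_left _ _)
  have hkγ : k ≤ γ := le_trans hk (min_le_right _ _)
  have hηk : η k = ∑ l ∈ Finset.Icc 1 k, tens (v l) (ξ (k + 1 - l)) := by
    funext q; rw [hη]; simp [tens, Finset.sum_apply]
  rw [cmap_kron_add, ← hEcdef, ← hSdef, hηk, sum_vecMul']
  have step : ∀ l ∈ Finset.Icc 1 k,
      tens (v l) (ξ (k + 1 - l)) ᵥ* ((1 : Matrix (Fin N) (Fin N) ℂ) ⊗ₖ Ec + cmap W ⊗ₖ S)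
        = θ • tens (v l) (ξ (k + 1 - l))
          + ((if l = 1 then 0 else tens (v (l - 1)) (ξ (k + 1 - l) ᵥ* S))
             - (if l = k then 0 else tens (v l) (ξ (k - l) ᵥ* S))) := by
    intro l hl
    rw [Finset.mem_Icc] at hl
    have hWv : v l ᵥ* cmap W = μ • v l + (if l = 1 then 0 else v (l - 1)) := by
      by_cases h1 : l = 1
      · subst h1; simp [hv1]
      · rw [if_neg h1]; exact hvk l (by omega) (by omega)
    have hEξ : ξ (k + 1 - l) ᵥ* Ec + μ • (ξ (k + 1 - l) ᵥ* S)
        = θ • ξ (k + 1 - l) - (if l = k then 0 else ξ (k - l) ᵥ* S) := by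
      by_cases hlk : l = k
      · have e1 : k + 1 - l = 1 := by omega
        rw [if_pos hlk, e1, sub_zero]
        rw [Matrix.vecMul_add, vecMul_smul_mat] at hξ1
        exact hξ1
      · have h2 : 2 ≤ k + 1 - l := by omega
        have := hξk (k + 1 - l) h2 (by omega)
        rw [Matrix.vecMul_add, vecMul_smul_mat] at this
        have e2 : k + 1 - l - 1 = k - l := by omega
        rw [e2] at this
        rw [if_neg hlk]
        exact eq_sub_of_add_eq this
    rw [Matrix.vecMul_add, tens_vecMul_kron, tens_vecMul_kron, Matrix.vecMul_one, hWv,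
      tens_add_left, tens_smul_left]
    simp only [apply_ite (fun a => tens a (ξ (k + 1 - l) ᵥ* S)), tens_zero_left]
    have key2 : tens (v l) (ξ (k + 1 - l) ᵥ* Ec) + μ • tens (v l) (ξ (k + 1 - l) ᵥ* S)
        = θ • tens (v l) (ξ (k + 1 - l))
          - (if l = k then 0 else tens (v l) (ξ (k - l) ᵥ* S)) := by
      have h3 := congrArg (tens (v l)) hEξ
      rw [tens_add_right, tens_smul_right, tens_sub_right, tens_smul_right] at h3
      simpa [apply_ite (tens (v l)), tens_zero_right] using h3
    rw [← add_assoc, key2]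
    abel
  rw [Finset.sum_congr rfl step]
  have hcancel :
      (∑ l ∈ Finset.Icc 1 k, (if l = 1 then 0 else tens (v (l - 1)) (ξ (k + 1 - l) ᵥ* S)))
        = ∑ l ∈ Finset.Icc 1 k, (if l = k then 0 else tens (v l) (ξ (k - l) ᵥ* S)) := by
    obtain ⟨j, rfl⟩ : ∃ j, k = j + 1 := ⟨k - 1, by omega⟩
    have hR : (∑ l ∈ Finset.Icc 1 (j + 1),
          (if l = j + 1 then 0 else tens (v l) (ξ (j + 1 - l) ᵥ* S)))
        = ∑ l ∈ Finset.Icc 1 j, tens (v l) (ξ (j + 1 - l) ᵥ* S) := by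
      rw [Finset.sum_Icc_succ_top (by omega), if_pos rfl, add_zero]
      refine Finset.sum_congr rfl fun l hl => ?_
      rw [Finset.mem_Icc] at hl
      rw [if_neg (by omega)]
    rw [hR, ← Finset.sum_erase (Finset.Icc 1 (j + 1))
      (f := fun l => if l = 1 then 0 else tens (v (l - 1)) (ξ (j + 1 + 1 - l) ᵥ* S))
      (a := 1) (by simp), Finset.Icc_erase_left]
    refine Finset.sum_nbij' (fun l => l - 1) (fun l => l + 1) ?_ ?_ ?_ ?_ ?_
    · intro a ha; simp only [Finset.mem_Ioc, Finset.mem_Icc] at ha ⊢; omega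
    · intro a ha; simp only [Finset.mem_Ioc, Finset.mem_Icc] at ha ⊢; omega
    · intro a ha; simp only [Finset.mem_Ioc] at ha; omega
    · intro a ha; simp only [Finset.mem_Icc] at ha; omega
    · intro a ha
      simp only [Finset.mem_Ioc] at ha
      show (if a = 1 then 0 else tens (v (a - 1)) (ξ (j + 1 + 1 - a) ᵥ* S))
        = tens (v (a - 1)) (ξ (j + 1 - (a - 1)) ᵥ* S)
      rw [if_neg (by omega), show j + 1 + 1 - a = j + 1 - (a - 1) from by omega]
  rw [Finset.sum_add_distrib, Finset.sum_sub_distrib, hcancel, sub_self, add_zero,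
    ← Finset.smul_sum, ← hηk]
end

section
/- Consider the two-layer drive-response networked sampled-data system with state matrix Φ_s = [[Φ^{1,1}, 0], [Φ^{2,1}, Φ^{2,2}]] and input matrix Ψ_s = diag(Ψ^{1,1}, Ψ^{2,2}). Suppose: (1) for every θ ∈ ℂ and every nonzero row vector η ∈ ℂ^{1×Nn} with η Φ^{1,1} = θ η, one has η Ψ^{1,1} ≠ 0; and (2) for every θ ∈ ℂ, every nonzero η ∈ ℂ^{1×Nn} with η Φ^{2,2} = θ η, and every ξ ∈ ℂ^{1×Nn} with ξ(θ I_{Nn} − Φ^{1,1}) = η Φ^{2,1}, the concatenated row vector [ξ Ψ^{1,1}, η Ψ^{2,2}] is nonzero. Then the discrete-time system x(k+1) = Φ_s x(k) + Ψ_s u(k) is controllable. -/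
open Matrix
open scoped Kronecker

section PBH

variable {q r : Type*} [Fintype q] [DecidableEq q] [Fintype r] [DecidableEq r]

lemma cmap_mul {a b c : Type*} [Fintype b] (A : Matrix a b ℝ) (B : Matrix b c ℝ) :
    cmap (A * B) = cmap A * cmap B := by
  show (A * B).map (Complex.ofRealHom : ℝ →+* ℂ) = _
  rw [Matrix.map_mul]; rfl

lemma cmap_pow (A : Matrix q q ℝ) (j : ℕ) : cmap (A ^ j) = cmap A ^ j := by
  induction j with
  | zero =>
      simp only [pow_zero]
      exact Matrix.map_one _ Complex.ofReal_zero Complex.ofReal_one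
  | succ k ih => rw [pow_succ, cmap_mul, ih, pow_succ]

set_option maxHeartbeats 1000000 in
lemma pbh_span_top (F : Matrix q q ℝ) (G : Matrix q r ℝ)
    (hpbh : ∀ (θ : ℂ) (η : q → ℂ), η ≠ 0 → η ᵥ* cmap F = θ • η → η ᵥ* cmap G ≠ 0) :
    (⨆ j : ℕ, Submodule.span ℝ (Set.range ((F ^ j * G).mulVec))) = ⊤ := by
  by_contra hne
  set W := ⨆ j : ℕ, Submodule.span ℝ (Set.range ((F ^ j * G).mulVec)) with hW
  obtain ⟨φ, hφne, hφmap⟩ :=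
    W.exists_dual_map_eq_bot_of_lt_top (lt_top_iff_ne_top.mpr hne) inferInstance
  have hφ0 : ∀ x ∈ W, φ x = 0 := by
    intro x hx
    have hmem : φ x ∈ W.map φ := Submodule.mem_map_of_mem hx
    rw [hφmap] at hmem
    simpa using hmem
  set ηr : q → ℝ := fun i => φ (Pi.single i 1) with hηr
  have hηrne : ηr ≠ 0 := by
    intro hz
    apply hφne
    refine LinearMap.ext fun x => ?_
    rw [LinearMap.pi_apply_eq_sum_univ φ x]
    have h1 : ∀ i, φ (Pi.single i 1) = 0 := fun i => congrFun hz i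
    have h2 : ∀ i : q, (fun j => if i = j then (1:ℝ) else 0) = Pi.single i 1 :=
      fun i => funext fun j => by simp [Pi.single_apply, eq_comm]
    simp [h2, h1]
  have hkey : ∀ (j : ℕ) (c : r), (ηr ᵥ* (F ^ j * G)) c = 0 := by
    intro j c
    have hx : (F ^ j * G).mulVec (Pi.single c 1) ∈ W := by
      rw [hW]
      exact Submodule.mem_iSup_of_mem j (Submodule.subset_span ⟨Pi.single c 1, rfl⟩)
    have h0 := hφ0 _ hx
    rw [LinearMap.pi_apply_eq_sum_univ φ] at h0
    have h2 : ∀ i : q, ((F ^ j * G).mulVec (Pi.single c 1)) i = (F ^ j * G) i c := by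
      intro i; simp [mulVec, dotProduct, Pi.single_apply]
    have h2' : ∀ i : q, (fun j => if i = j then (1:ℝ) else 0) = Pi.single i 1 :=
      fun i => funext fun j => by simp [Pi.single_apply, eq_comm]
    simp only [h2, h2', smul_eq_mul] at h0
    show (ηr ᵥ* (F ^ j * G)) c = 0
    simp only [vecMul, dotProduct, hηr]
    rw [← h0]
    exact Finset.sum_congr rfl fun i _ => mul_comm _ _
  set ηc : q → ℂ := fun i => (ηr i : ℂ) with hηc
  have hηcne : ηc ≠ 0 := by
    intro hz
    apply hηrne
    ext i
    have := congrFun hz i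
    simpa [hηc, Complex.ofReal_eq_zero] using this
  have hckey : ∀ j : ℕ, ηc ᵥ* (cmap F ^ j * cmap G) = 0 := by
    intro j
    have hr := hkey j
    funext c
    have hr' : ∑ i, ηr i * (F ^ j * G) i c = 0 := by
      simpa [vecMul, dotProduct] using hr c
    rw [← cmap_pow, ← cmap_mul]
    simp only [vecMul, dotProduct, cmap, Matrix.map_apply, Pi.zero_apply, hηc]
    exact_mod_cast hr'
  set V : Submodule ℂ (q → ℂ) :=
    ⨅ j : ℕ, LinearMap.ker ((cmap F ^ j * cmap G).vecMulLinear) with hV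
  have hmemV : ∀ x : q → ℂ, x ∈ V ↔ ∀ j, x ᵥ* (cmap F ^ j * cmap G) = 0 := by
    intro x
    simp [hV, Submodule.mem_iInf, LinearMap.mem_ker]
  have hηcV : ηc ∈ V := (hmemV ηc).mpr hckey
  have hinv : ∀ x ∈ V, (cmap F).vecMulLinear x ∈ V := by
    intro x hx
    rw [hmemV] at hx ⊢
    intro j
    rw [Matrix.vecMulLinear_apply, Matrix.vecMul_vecMul, ← Matrix.mul_assoc, ← pow_succ']
    exact hx (j + 1)
  haveI : Nontrivial V :=
    ⟨⟨ηc, hηcV⟩, 0, fun hc => hηcne (by simpa [Subtype.ext_iff] using hc)⟩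
  obtain ⟨μ, hμ⟩ := Module.End.exists_eigenvalue (((cmap F).vecMulLinear).restrict hinv)
  obtain ⟨v, hv⟩ := hμ.exists_hasEigenvector
  have hvne : (v : q → ℂ) ≠ 0 := fun hc => hv.2 (Subtype.ext hc)
  have heig : (v : q → ℂ) ᵥ* cmap F = μ • (v : q → ℂ) := by
    have h1 := Module.End.mem_eigenspace_iff.mp hv.1
    have h2 := congrArg (Subtype.val) h1
    simpa [LinearMap.restrict_apply] using h2
  have hG : (v : q → ℂ) ᵥ* cmap G = 0 := by
    have := (hmemV _).mp v.2 0
    simpa using this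
  exact hpbh μ _ hvne heig hG

set_option maxHeartbeats 1000000 in
lemma pbh_controllable (F : Matrix q q ℝ) (G : Matrix q r ℝ)
    (hpbh : ∀ (θ : ℂ) (η : q → ℂ), η ≠ 0 → η ᵥ* cmap F = θ • η → η ᵥ* cmap G ≠ 0) :
    Controllable F G := by
  have htop := pbh_span_top F G hpbh
  set f : ℕ → Submodule ℝ (q → ℝ) :=
    fun j => Submodule.span ℝ (Set.range ((F ^ j * G).mulVec)) with hf
  have hsup : ⨆ T, partialSups f T = ⊤ := by rw [iSup_partialSups_eq]; exact htop
  have hch : ∀ i : q, ∃ T, (Pi.single i 1 : q → ℝ) ∈ partialSups f T := by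
    intro i
    have hm : (Pi.single i 1 : q → ℝ) ∈ ⨆ T, partialSups f T := by rw [hsup]; trivial
    exact (Submodule.mem_iSup_of_directed _ (partialSups f).monotone.directed_le).mp hm
  choose Tf hTf using hch
  set T₀ := Finset.univ.sup Tf with hT₀
  have htopT : partialSups f T₀ = ⊤ := by
    rw [eq_top_iff, ← (Pi.basisFun ℝ q).span_eq, Submodule.span_le]
    rintro x ⟨i, rfl⟩
    have h1 : (Pi.single i 1 : q → ℝ) ∈ partialSups f T₀ :=
      (partialSups f).monotone (Finset.le_sup (Finset.mem_univ i)) (hTf i)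
    simpa [Pi.basisFun_apply] using h1
  set L : (ℕ → r → ℝ) →ₗ[ℝ] (q → ℝ) :=
    ∑ i ∈ Finset.range (T₀ + 1), ((F ^ (T₀ - i) * G).mulVecLin).comp (LinearMap.proj i) with hL
  have hLapply : ∀ u : ℕ → r → ℝ,
      L u = ∑ i ∈ Finset.range (T₀ + 1), (F ^ (T₀ - i) * G).mulVec (u i) := by
    intro u
    simp [hL, LinearMap.sum_apply]
  have hrange : LinearMap.range L = ⊤ := by
    rw [eq_top_iff, ← htopT, partialSups_eq_biSup]
    refine iSup_le fun j => iSup_le fun hj => ?_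
    rw [hf, Submodule.span_le]
    rintro x ⟨w, rfl⟩
    refine ⟨fun k => if k = T₀ - j then w else 0, ?_⟩
    rw [hLapply, Finset.sum_eq_single (T₀ - j)]
    · rw [if_pos rfl, Nat.sub_sub_self hj]
    · intro b _ hbne
      simp [if_neg hbne]
    · intro habs
      exact absurd (Finset.mem_range.mpr (Nat.lt_succ_of_le (Nat.sub_le _ _))) habs
  intro x₀ xf
  obtain ⟨u, hu⟩ := (LinearMap.range_eq_top.mp hrange) (xf - (F ^ (T₀ + 1)).mulVec x₀)
  have hFsum : ∀ (s : Finset ℕ) (g : ℕ → q → ℝ),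
      F.mulVec (∑ i ∈ s, g i) = ∑ i ∈ s, F.mulVec (g i) := by
    intro s g
    exact map_sum F.mulVecLin g s
  refine ⟨T₀ + 1, u,
    fun k => (F ^ k).mulVec x₀ + ∑ i ∈ Finset.range k, (F ^ (k - 1 - i) * G).mulVec (u i),
    ?_, ?_, ?_⟩
  · simp
  · intro k
    show F ^ (k + 1) *ᵥ x₀ + ∑ i ∈ Finset.range (k + 1), (F ^ (k + 1 - 1 - i) * G) *ᵥ u i
        = F *ᵥ (F ^ k *ᵥ x₀ + ∑ i ∈ Finset.range k, (F ^ (k - 1 - i) * G) *ᵥ u i) + G *ᵥ u k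
    rw [Matrix.mulVec_add, hFsum, Matrix.mulVec_mulVec, ← pow_succ', Finset.sum_range_succ]
    have h2 : ∀ i ∈ Finset.range k,
        F *ᵥ ((F ^ (k - 1 - i) * G) *ᵥ u i) = (F ^ (k + 1 - 1 - i) * G) *ᵥ u i := by
      intro i hi
      rw [Matrix.mulVec_mulVec, ← Matrix.mul_assoc, ← pow_succ']
      have he : k - 1 - i + 1 = k + 1 - 1 - i := by
        have := Finset.mem_range.mp hi; omega
      rw [he]
    rw [Finset.sum_congr rfl h2]
    have h3 : (F ^ (k + 1 - 1 - k) * G) *ᵥ u k = G *ᵥ u k := by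
      have hz : k + 1 - 1 - k = 0 := by omega
      rw [hz, pow_zero, Matrix.one_mul]
    rw [h3]
    abel
  · show F ^ (T₀ + 1) *ᵥ x₀ + ∑ i ∈ Finset.range (T₀ + 1), (F ^ (T₀ + 1 - 1 - i) * G) *ᵥ u i = xf
    have heq : ∑ i ∈ Finset.range (T₀ + 1), (F ^ (T₀ + 1 - 1 - i) * G) *ᵥ u i = L u := by
      rw [hLapply]
      refine Finset.sum_congr rfl fun i hi => ?_
      have he : T₀ + 1 - 1 - i = T₀ - i := by omega
      rw [he]
    rw [heq, hu]
    abel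

end PBH

/-- sufficient controllability condition for the two-layer drive-response
networked sampled-data system. -/
theorem twoLayer_driveResponse_controllable
    (N n m p : ℕ)
    (A1 A2 : Matrix (Fin n) (Fin n) ℝ) (B1 B2 : Matrix (Fin n) (Fin p) ℝ)
    (C1 C2 : Matrix (Fin m) (Fin n) ℝ) (H1 H2 : Matrix (Fin n) (Fin m) ℝ)
    (W1 W2 : Matrix (Fin N) (Fin N) ℝ) (Δ1 Δ2 : Matrix (Fin N) (Fin N) ℝ)
    (hΔ1d : Δ1.IsDiag) (hΔ2d : Δ2.IsDiag)
    (hΔ1v : ∀ i, Δ1 i i = 0 ∨ Δ1 i i = 1) (hΔ2v : ∀ i, Δ2 i i = 0 ∨ Δ2 i i = 1)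
    (D21 : Matrix (Fin N) (Fin N) ℝ) (P21 : Matrix (Fin n) (Fin m) ℝ)
    (h : ℝ) (hh : 0 < h)
    (Φ11 Φ22 Φ21 : Matrix (Fin N × Fin n) (Fin N × Fin n) ℝ)
    (Ψ11 Ψ22 : Matrix (Fin N × Fin n) (Fin N × Fin p) ℝ)
    (hΦ11 : Φ11 = (1 : Matrix (Fin N) (Fin N) ℝ) ⊗ₖ matExp (h • A1)
        + W1 ⊗ₖ (intExp A1 h * H1 * C1))
    (hΦ22 : Φ22 = (1 : Matrix (Fin N) (Fin N) ℝ) ⊗ₖ matExp (h • A2)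
        + W2 ⊗ₖ (intExp A2 h * H2 * C2))
    (hΦ21 : Φ21 = D21 ⊗ₖ (intExp A2 h * P21 * C1))
    (hΨ11 : Ψ11 = Δ1 ⊗ₖ (intExp A1 h * B1))
    (hΨ22 : Ψ22 = Δ2 ⊗ₖ (intExp A2 h * B2))
    -- condition (1): drive layer
    (cond1 : ∀ (θ : ℂ) (η : Fin N × Fin n → ℂ), η ≠ 0 →
      η ᵥ* cmap Φ11 = θ • η → η ᵥ* cmap Ψ11 ≠ 0)
    -- condition (2): response layer together with inter-layer couplings
    (cond2 : ∀ (θ : ℂ) (η ξ : Fin N × Fin n → ℂ), η ≠ 0 →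
      η ᵥ* cmap Φ22 = θ • η →
      ξ ᵥ* (θ • (1 : Matrix (Fin N × Fin n) (Fin N × Fin n) ℂ) - cmap Φ11)
        = η ᵥ* cmap Φ21 →
      Sum.elim (ξ ᵥ* cmap Ψ11) (η ᵥ* cmap Ψ22) ≠ 0) :
    Controllable (Matrix.fromBlocks Φ11 0 Φ21 Φ22) (Matrix.fromBlocks Ψ11 0 0 Ψ22) := by
  classical
  apply pbh_controllable
  intro θ η hηne hEig
  have hΦc : cmap (Matrix.fromBlocks Φ11 0 Φ21 Φ22)
      = Matrix.fromBlocks (cmap Φ11) 0 (cmap Φ21) (cmap Φ22) := by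
    unfold cmap
    rw [Matrix.fromBlocks_map, Matrix.map_zero _ Complex.ofReal_zero]
  have hΨc : cmap (Matrix.fromBlocks Ψ11 0 0 Ψ22)
      = Matrix.fromBlocks (cmap Ψ11) 0 0 (cmap Ψ22) := by
    unfold cmap
    rw [Matrix.fromBlocks_map, Matrix.map_zero _ Complex.ofReal_zero]
  rw [hΦc, vecMul_fromBlocks] at hEig
  rw [hΨc, vecMul_fromBlocks]
  have h1 : (η ∘ Sum.inl) ᵥ* cmap Φ11 + (η ∘ Sum.inr) ᵥ* cmap Φ21 = θ • (η ∘ Sum.inl) := by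
    funext a; exact congrFun hEig (Sum.inl a)
  have h2 : (η ∘ Sum.inr) ᵥ* cmap Φ22 = θ • (η ∘ Sum.inr) := by
    funext a
    have h := congrFun hEig (Sum.inr a)
    simpa [Matrix.vecMul_zero] using h
  simp only [Matrix.vecMul_zero, add_zero, zero_add]
  by_cases hη2 : (η ∘ Sum.inr) = 0
  · have hξne : (η ∘ Sum.inl) ≠ 0 := by
      intro hξ
      apply hηne
      funext s
      cases s with
      | inl a => exact congrFun hξ a
      | inr a => exact congrFun hη2 a
    have hE : (η ∘ Sum.inl) ᵥ* cmap Φ11 = θ • (η ∘ Sum.inl) := by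
      rw [← h1, hη2, Matrix.zero_vecMul, add_zero]
    have hne1 := cond1 θ _ hξne hE
    intro hc
    apply hne1
    funext c
    exact congrFun hc (Sum.inl c)
  · have hξeq : (η ∘ Sum.inl) ᵥ* (θ • (1 : Matrix (Fin N × Fin n) (Fin N × Fin n) ℂ) - cmap Φ11)
        = (η ∘ Sum.inr) ᵥ* cmap Φ21 := by
      have hsm : (η ∘ Sum.inl) ᵥ* (θ • (1 : Matrix (Fin N × Fin n) (Fin N × Fin n) ℂ))
          = θ • (η ∘ Sum.inl) := by
        funext a
        simp [vecMul, dotProduct, Matrix.smul_apply, Matrix.one_apply, mul_ite,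
          Finset.sum_ite_eq, mul_comm]
      rw [Matrix.vecMul_sub, hsm, ← h1]
      abel
    exact cond2 θ _ _ hη2 h2 hξeq
end

section
/- Let W^1, W^2, D ∈ ℂ^{N×N}, let λ ∈ ℂ be an eigenvalue of W^2 that is not an eigenvalue of W^1 (so W^1 − λ I_N is invertible), and let v(1), …, v(α) ∈ ℂ^{1×N} be a left Jordan chain of W^2 at λ (v(1)W^2 = λ v(1) and v(k)W^2 = λ v(k) + v(k−1) for k = 2, …, α). Define u(1) = −v(1) D (W^1 − λ I_N)^{−1} and u(k) = (u(k−1) − v(k) D)(W^1 − λ I_N)^{−1} for k = 2, …, α. Then the vectors [u(k), v(k)] ∈ ℂ^{1×2N} form a left Jordan chain of the block matrix W̄ = [[W^1, 0], [D, W^2]] at λ; that is, [u(1), v(1)] W̄ = λ [u(1), v(1)] and [u(k), v(k)] W̄ = λ [u(k), v(k)] + [u(k−1), v(k−1)] for k = 2, …, α. -/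
open Matrix
open scoped Kronecker

/-- a left Jordan chain of `W^2` at `λ` (with `λ` not an eigenvalue of `W^1`)
extends to a left Jordan chain of the block lower-triangular matrix
`W̄ = [[W^1, 0], [D, W^2]]` at `λ`. -/
theorem jordanChain_blockTriangular
    (N : ℕ) (W1 W2 D : Matrix (Fin N) (Fin N) ℂ) (μ : ℂ)
    (hμ2 : IsEig W2 μ) (hμ1 : ¬ IsEig W1 μ)
    (α : ℕ) (v : ℕ → Fin N → ℂ)
    (hv1 : v 1 ᵥ* W2 = μ • v 1)
    (hvk : ∀ k, 2 ≤ k → k ≤ α → v k ᵥ* W2 = μ • v k + v (k - 1))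
    (u : ℕ → Fin N → ℂ)
    (hu1 : u 1 = -((v 1 ᵥ* D) ᵥ* (W1 - μ • (1 : Matrix (Fin N) (Fin N) ℂ))⁻¹))
    (huk : ∀ k, 2 ≤ k → k ≤ α →
      u k = (u (k - 1) - v k ᵥ* D) ᵥ* (W1 - μ • (1 : Matrix (Fin N) (Fin N) ℂ))⁻¹) :
    (Sum.elim (u 1) (v 1)) ᵥ* Matrix.fromBlocks W1 0 D W2 = μ • Sum.elim (u 1) (v 1) ∧
    ∀ k, 2 ≤ k → k ≤ α →
      (Sum.elim (u k) (v k)) ᵥ* Matrix.fromBlocks W1 0 D W2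
        = μ • Sum.elim (u k) (v k) + Sum.elim (u (k - 1)) (v (k - 1)) := by
  set A := W1 - μ • (1 : Matrix (Fin N) (Fin N) ℂ) with hAdef
  have hA : IsUnit A.det := by
    rw [isUnit_iff_ne_zero]
    intro hdet
    obtain ⟨w, hw, hw0⟩ := (Matrix.exists_mulVec_eq_zero_iff).mpr hdet
    refine hμ1 ⟨w, hw, ?_⟩
    rw [hAdef, Matrix.sub_mulVec, Matrix.smul_mulVec, Matrix.one_mulVec,
      sub_eq_zero] at hw0
    exact hw0
  have key : ∀ x : Fin N → ℂ, (x ᵥ* A⁻¹) ᵥ* A = x := fun x => by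
    rw [Matrix.vecMul_vecMul, Matrix.nonsing_inv_mul _ hA, Matrix.vecMul_one]
  have expand : ∀ x : Fin N → ℂ, x ᵥ* A = x ᵥ* W1 - μ • x := fun x => by
    rw [hAdef, Matrix.vecMul_sub]
    congr 1
    ext j
    simp [Matrix.vecMul, dotProduct, Matrix.one_apply, mul_comm]
  constructor
  · have h1 : u 1 ᵥ* A = -(v 1 ᵥ* D) := by
      rw [hu1, Matrix.neg_vecMul, key]
    rw [expand] at h1
    have hW1 : u 1 ᵥ* W1 + v 1 ᵥ* D = μ • u 1 := by
      rw [sub_eq_iff_eq_add.mp h1]; abel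
    rw [Matrix.vecMul_fromBlocks]
    simp only [Sum.elim_comp_inl, Sum.elim_comp_inr, Matrix.vecMul_zero, zero_add, hW1, hv1]
    funext i
    cases i <;> simp
  · intro k hk2 hkα
    have h1 : u k ᵥ* A = u (k - 1) - v k ᵥ* D := by
      rw [huk k hk2 hkα, key]
    rw [expand] at h1
    have hW1 : u k ᵥ* W1 + v k ᵥ* D = μ • u k + u (k - 1) := by
      rw [sub_eq_iff_eq_add.mp h1]; abel
    rw [Matrix.vecMul_fromBlocks]
    simp only [Sum.elim_comp_inl, Sum.elim_comp_inr, Matrix.vecMul_zero, zero_add, hW1,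
      hvk k hk2 hkα]
    funext i
    cases i <;> simp
end

section
/- Consider the homogeneous two-layer drive-response system: let A ∈ ℝ^{n×n}, H ∈ ℝ^{n×m}, C ∈ ℝ^{m×n}, h > 0, W^1, W^2, D^{2,1} ∈ ℝ^{N×N}, W̄ = [[W^1, 0], [D^{2,1}, W^2]], and Φ_s = I_{2N} ⊗ e^{Ah} + W̄ ⊗ 𝓗(h). Let λ ∈ ℂ be an eigenvalue of W^2 that is not an eigenvalue of W^1, let v(1), …, v(α) ∈ ℂ^{1×N} be a left Jordan chain of W^2 at λ, define v^{2,1}(1) = −v(1) D^{2,1}(W^1 − λ I_N)^{−1} and v^{2,1}(k) = (v^{2,1}(k−1) − v(k) D^{2,1})(W^1 − λ I_N)^{−1} for k = 2, …, α, and let ξ(1), …, ξ(γ) ∈ ℂ^{1×n} be a generalized left Jordan chain of E = e^{Ah} + λ·𝓗(h) about 𝓗(h) at θ ∈ ℂ (ξ(1)E = θ ξ(1) and ξ(k)E + ξ(k−1)𝓗(h) = θ ξ(k) for k ≥ 2). Then for every k with 1 ≤ k ≤ min(α, γ), the row vector η(k) = Σ_{l=1}^{k} [v^{2,1}(l), v(l)]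 ⊗ ξ(k+1−l) satisfies η(k)·Φ_s = θ·η(k). -/
set_option linter.unusedSectionVars false
set_option linter.unusedVariables false
set_option maxHeartbeats 1000000


open Matrix
open scoped Kronecker

namespace TLAux

def kv {I J : Type*} (a : I → ℂ) (b : J → ℂ) : I × J → ℂ := fun p => a p.1 * b p.2

variable {I J : Type*} [Fintype I] [Fintype J]

lemma kv_vecMul (a : I → ℂ) (b : J → ℂ) (M : Matrix I I ℂ) (Nm : Matrix J J ℂ) :
    kv a b ᵥ* (M ⊗ₖ Nm) = kv (a ᵥ* M) (b ᵥ* Nm) := by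
  funext p
  simp only [kv, vecMul, dotProduct, kroneckerMap_apply, Fintype.sum_prod_type,
    Finset.sum_mul_sum]
  exact Finset.sum_congr rfl fun x _ => Finset.sum_congr rfl fun y _ => by ring

lemma kv_add_left (a a' : I → ℂ) (b : J → ℂ) : kv (a + a') b = kv a b + kv a' b := by
  funext p; simp [kv, add_mul]

lemma kv_smul_left (c : ℂ) (a : I → ℂ) (b : J → ℂ) : kv (c • a) b = c • kv a b := by
  funext p; simp [kv, mul_assoc]

lemma kv_add_right (a : I → ℂ) (b b' : J → ℂ) : kv a (b + b') = kv a b + kv a b' := by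
  funext p; simp [kv, mul_add]

lemma kv_smul_right (c : ℂ) (a : I → ℂ) (b : J → ℂ) : kv a (c • b) = c • kv a b := by
  funext p; simp [kv]; ring

lemma kv_sub_right (a : I → ℂ) (b b' : J → ℂ) : kv a (b - b') = kv a b - kv a b' := by
  funext p; simp [kv, mul_sub]

lemma kv_zero_left (b : J → ℂ) : kv (0 : I → ℂ) b = 0 := by funext p; simp [kv]

lemma kv_zero_right (a : I → ℂ) : kv a (0 : J → ℂ) = 0 := by funext p; simp [kv]

lemma sum_vecMul {R : Type*} [CommRing R] (s : Finset ℕ) (f : ℕ → I → R)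
    (M : Matrix I J R) : (∑ l ∈ s, f l) ᵥ* M = ∑ l ∈ s, f l ᵥ* M := by
  funext j
  simp [vecMul, dotProduct, Finset.sum_apply, Finset.sum_mul]
  rw [Finset.sum_comm]

lemma vecMul_smulMat {R : Type*} [CommRing R] (c : R) (x : I → R) (M : Matrix I J R) :
    x ᵥ* (c • M) = c • (x ᵥ* M) := by
  funext j
  simp [vecMul, dotProduct, Finset.mul_sum]
  exact Finset.sum_congr rfl fun i _ => by ring

lemma cmap_add {a b : Type*} (M N : Matrix a b ℝ) : cmap (M + N) = cmap M + cmap N := by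
  funext i j; simp [cmap]

lemma cmap_zero {a b : Type*} : cmap (0 : Matrix a b ℝ) = 0 := by
  funext i j; simp [cmap]

lemma cmap_one [DecidableEq I] : cmap (1 : Matrix I I ℝ) = 1 :=
  Matrix.map_one _ Complex.ofReal_zero Complex.ofReal_one

lemma cmap_kron {a b c d : Type*} (M : Matrix a b ℝ) (N : Matrix c d ℝ) :
    cmap (M ⊗ₖ N) = cmap M ⊗ₖ cmap N := by
  funext i j; simp [cmap, kroneckerMap_apply]

lemma cmap_fromBlocks {a b c d : Type*} (A : Matrix a b ℝ) (B : Matrix a c ℝ)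
    (C : Matrix d b ℝ) (D : Matrix d c ℝ) :
    cmap (Matrix.fromBlocks A B C D) = Matrix.fromBlocks (cmap A) (cmap B) (cmap C) (cmap D) := by
  funext i j; cases i <;> cases j <;> rfl

lemma sum_Icc_one {M : Type*} [AddCommMonoid M] (k : ℕ) (f : ℕ → M) :
    ∑ l ∈ Finset.Icc 1 k, f l = ∑ i ∈ Finset.range k, f (i + 1) := by
  induction k with
  | zero => simp
  | succ k ih =>
    rw [Finset.sum_Icc_succ_top (by omega), ih, Finset.sum_range_succ]

end TLAux

open TLAux

/-- left generalized eigenvectors of the homogeneous two-layer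
drive-response sampled system `Φ_s = I_{2N} ⊗ e^{Ah} + W̄ ⊗ 𝓗(h)`. -/
theorem homogeneous_twoLayer_left_eigenvectors
    (N n m : ℕ)
    (A : Matrix (Fin n) (Fin n) ℝ) (H : Matrix (Fin n) (Fin m) ℝ)
    (C : Matrix (Fin m) (Fin n) ℝ) (h : ℝ) (hh : 0 < h)
    (W1 W2 D21 : Matrix (Fin N) (Fin N) ℝ)
    (μ θ : ℂ)
    (hμ2 : IsEig (cmap W2) μ) (hμ1 : ¬ IsEig (cmap W1) μ)
    (α γ : ℕ) (v v21 : ℕ → Fin N → ℂ) (ξ : ℕ → Fin n → ℂ)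
    -- left Jordan chain of W² at μ
    (hv1 : v 1 ᵥ* cmap W2 = μ • v 1)
    (hvk : ∀ k, 2 ≤ k → k ≤ α → v k ᵥ* cmap W2 = μ • v k + v (k - 1))
    -- the coupled vectors v^{2,1}(k)
    (hv211 : v21 1 = -((v 1 ᵥ* cmap D21)
        ᵥ* (cmap W1 - μ • (1 : Matrix (Fin N) (Fin N) ℂ))⁻¹))
    (hv21k : ∀ k, 2 ≤ k → k ≤ α →
      v21 k = (v21 (k - 1) - v k ᵥ* cmap D21)
        ᵥ* (cmap W1 - μ • (1 : Matrix (Fin N) (Fin N) ℂ))⁻¹)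
    -- generalized left Jordan chain of E = e^{Ah} + μ·𝓗(h) about 𝓗(h) at θ
    (hξ1 : ξ 1 ᵥ* (cmap (matExp (h • A)) + μ • cmap (intExp A h * H * C)) = θ • ξ 1)
    (hξk : ∀ k, 2 ≤ k → k ≤ γ →
      ξ k ᵥ* (cmap (matExp (h • A)) + μ • cmap (intExp A h * H * C))
        + ξ (k - 1) ᵥ* cmap (intExp A h * H * C) = θ • ξ k)
    (η : ℕ → (Fin N ⊕ Fin N) × Fin n → ℂ)
    (hη : ∀ k, η k = fun q =>
      ∑ l ∈ Finset.Icc 1 k, Sum.elim (v21 l) (v l) q.1 * ξ (k + 1 - l) q.2) :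
    ∀ k, 1 ≤ k → k ≤ min α γ →
      η k ᵥ* cmap ((1 : Matrix (Fin N ⊕ Fin N) (Fin N ⊕ Fin N) ℝ) ⊗ₖ matExp (h • A)
          + (Matrix.fromBlocks W1 0 D21 W2) ⊗ₖ (intExp A h * H * C)) = θ • η k := by
  intro k hk1 hk2
  have hkα : k ≤ α := hk2.trans (min_le_left _ _)
  have hkγ : k ≤ γ := hk2.trans (min_le_right _ _)
  set Ec := cmap (matExp (h • A)) with hEc
  set Bc := cmap (intExp A h * H * C) with hBc
  set W1c := cmap W1 with hW1c
  set W2c := cmap W2 with hW2c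
  set D21c := cmap D21 with hD21c
  set Wc : Matrix (Fin N ⊕ Fin N) (Fin N ⊕ Fin N) ℂ :=
    Matrix.fromBlocks W1c 0 D21c W2c with hWc
  -- invertibility of W1c - μ•1
  have hdet : IsUnit (W1c - μ • (1 : Matrix (Fin N) (Fin N) ℂ)).det := by
    rw [isUnit_iff_ne_zero]
    intro h0
    obtain ⟨x, hx0, hx⟩ := Matrix.exists_mulVec_eq_zero_iff.mpr h0
    refine hμ1 ⟨x, hx0, ?_⟩
    rw [Matrix.sub_mulVec, Matrix.smul_mulVec, Matrix.one_mulVec, sub_eq_zero] at hx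
    exact hx
  have hGM : (W1c - μ • (1 : Matrix (Fin N) (Fin N) ℂ))⁻¹
      * (W1c - μ • (1 : Matrix (Fin N) (Fin N) ℂ)) = 1 := Matrix.nonsing_inv_mul _ hdet
  have hMμ : ∀ x : Fin N → ℂ,
      x ᵥ* (W1c - μ • (1 : Matrix (Fin N) (Fin N) ℂ)) = x ᵥ* W1c - μ • x := by
    intro x
    rw [Matrix.vecMul_sub, TLAux.vecMul_smulMat, Matrix.vecMul_one]
  -- chains
  have hv21chain : ∀ i, i + 1 ≤ α →
      v21 (i+1) ᵥ* W1c + v (i+1) ᵥ* D21c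
        = μ • v21 (i+1) + (if i = 0 then (0 : Fin N → ℂ) else v21 i) := by
    intro i hi
    rcases Nat.eq_zero_or_pos i with rfl | hipos
    · have h1 : v21 1 ᵥ* (W1c - μ • (1 : Matrix (Fin N) (Fin N) ℂ)) = -(v 1 ᵥ* D21c) := by
        rw [hv211, Matrix.neg_vecMul, Matrix.vecMul_vecMul, hGM, Matrix.vecMul_one]
      rw [hMμ, sub_eq_iff_eq_add] at h1
      rw [if_pos rfl, add_zero, zero_add, h1]
      abel
    · have h2 := hv21k (i+1) (by omega) hi
      simp only [Nat.add_sub_cancel] at h2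
      have h1 : v21 (i+1) ᵥ* (W1c - μ • (1 : Matrix (Fin N) (Fin N) ℂ))
          = v21 i - v (i+1) ᵥ* D21c := by
        rw [h2, Matrix.vecMul_vecMul, hGM, Matrix.vecMul_one]
      rw [hMμ, sub_eq_iff_eq_add] at h1
      rw [if_neg (by omega), h1]
      abel
  have hvchain : ∀ i, i + 1 ≤ α →
      v (i+1) ᵥ* W2c = μ • v (i+1) + (if i = 0 then (0 : Fin N → ℂ) else v i) := by
    intro i hi
    rcases Nat.eq_zero_or_pos i with rfl | hipos
    · simpa using hv1
    · have h2 := hvk (i+1) (by omega) hi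
      simp only [Nat.add_sub_cancel] at h2
      rw [if_neg (by omega)]
      exact h2
  have hwchain : ∀ i, i + 1 ≤ α →
      (Sum.elim (v21 (i+1)) (v (i+1))) ᵥ* Wc
        = μ • Sum.elim (v21 (i+1)) (v (i+1))
          + Sum.elim (if i = 0 then (0 : Fin N → ℂ) else v21 i)
              (if i = 0 then (0 : Fin N → ℂ) else v i) := by
    intro i hi
    rw [hWc, Matrix.vecMul_fromBlocks]
    have e1 := hv21chain i hi
    have e2 := hvchain i hi
    funext q
    cases q with
    | inl j =>
      simpa using congrFun e1 j
    | inr j =>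
      simpa using congrFun e2 j
  have hξchain : ∀ j, 1 ≤ j → j ≤ γ →
      ξ j ᵥ* (Ec + μ • Bc)
        = θ • ξ j - (if j - 1 = 0 then (0 : Fin n → ℂ) else ξ (j-1) ᵥ* Bc) := by
    intro j hj1 hjγ
    rcases eq_or_lt_of_le hj1 with rfl | hj2
    · rw [if_pos rfl, sub_zero]
      exact hξ1
    · rw [if_neg (by omega)]
      exact eq_sub_of_add_eq (hξk j (by omega) hjγ)
  -- rewrite the big matrix
  have hΦ : cmap ((1 : Matrix (Fin N ⊕ Fin N) (Fin N ⊕ Fin N) ℝ) ⊗ₖ matExp (h • A)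
        + (Matrix.fromBlocks W1 0 D21 W2) ⊗ₖ (intExp A h * H * C))
      = (1 : Matrix (Fin N ⊕ Fin N) (Fin N ⊕ Fin N) ℂ) ⊗ₖ Ec + Wc ⊗ₖ Bc := by
    rw [TLAux.cmap_add, TLAux.cmap_kron, TLAux.cmap_kron, TLAux.cmap_one,
      TLAux.cmap_fromBlocks, TLAux.cmap_zero, ← hEc, ← hBc, ← hW1c, ← hW2c, ← hD21c, ← hWc]
  -- rewrite η k as a range sum of Kronecker vectors
  have hη' : η k = ∑ i ∈ Finset.range k,
      TLAux.kv (Sum.elim (v21 (i+1)) (v (i+1))) (ξ (k - i)) := by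
    rw [hη]
    funext q
    simp only [Finset.sum_apply]
    rw [TLAux.sum_Icc_one]
    refine Finset.sum_congr rfl fun i hi => ?_
    simp only [Finset.mem_range] at hi
    have hki : k + 1 - (i + 1) = k - i := by omega
    rw [hki]
    rfl
  -- per-term computation
  have key : ∀ i ∈ Finset.range k,
      TLAux.kv (Sum.elim (v21 (i+1)) (v (i+1))) (ξ (k - i))
          ᵥ* ((1 : Matrix (Fin N ⊕ Fin N) (Fin N ⊕ Fin N) ℂ) ⊗ₖ Ec + Wc ⊗ₖ Bc)
        = θ • TLAux.kv (Sum.elim (v21 (i+1)) (v (i+1))) (ξ (k - i))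
          + (TLAux.kv (Sum.elim (if i = 0 then (0 : Fin N → ℂ) else v21 i)
                (if i = 0 then (0 : Fin N → ℂ) else v i)) (ξ (k - i) ᵥ* Bc)
            - TLAux.kv (Sum.elim (v21 (i+1)) (v (i+1)))
                (if k - i - 1 = 0 then (0 : Fin n → ℂ) else ξ (k - i - 1) ᵥ* Bc)) := by
    intro i hi
    simp only [Finset.mem_range] at hi
    have hx : ξ (k - i) ᵥ* Ec + μ • (ξ (k - i) ᵥ* Bc)
        = θ • ξ (k - i) - (if k - i - 1 = 0 then (0 : Fin n → ℂ) else ξ (k - i - 1) ᵥ* Bc) := by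
      rw [← TLAux.vecMul_smulMat, ← Matrix.vecMul_add]
      exact hξchain (k - i) (by omega) (by omega)
    rw [Matrix.vecMul_add, TLAux.kv_vecMul, TLAux.kv_vecMul, Matrix.vecMul_one,
      hwchain i (by omega), TLAux.kv_add_left, TLAux.kv_smul_left,
      ← add_assoc, ← TLAux.kv_smul_right, ← TLAux.kv_add_right, hx,
      TLAux.kv_sub_right, TLAux.kv_smul_right]
    abel
  -- telescoping identity between the two correction sums
  have hsums : ∑ i ∈ Finset.range k,
        TLAux.kv (Sum.elim (if i = 0 then (0 : Fin N → ℂ) else v21 i)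
            (if i = 0 then (0 : Fin N → ℂ) else v i)) (ξ (k - i) ᵥ* Bc)
      = ∑ i ∈ Finset.range k,
        TLAux.kv (Sum.elim (v21 (i+1)) (v (i+1)))
            (if k - i - 1 = 0 then (0 : Fin n → ℂ) else ξ (k - i - 1) ᵥ* Bc) := by
    obtain ⟨k', rfl⟩ : ∃ k', k = k' + 1 := ⟨k - 1, by omega⟩
    rw [Finset.sum_range_succ', Finset.sum_range_succ]
    have hz1 : TLAux.kv (Sum.elim (if (0:ℕ) = 0 then (0 : Fin N → ℂ) else v21 0)
        (if (0:ℕ) = 0 then (0 : Fin N → ℂ) else v 0)) (ξ (k' + 1 - 0) ᵥ* Bc) = 0 := by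
      funext p; simp [TLAux.kv]
    have hz2 : TLAux.kv (Sum.elim (v21 (k'+1)) (v (k'+1)))
        (if k' + 1 - k' - 1 = 0 then (0 : Fin n → ℂ) else ξ (k' + 1 - k' - 1) ᵥ* Bc) = 0 := by
      rw [if_pos (by omega), TLAux.kv_zero_right]
    rw [hz1, hz2, add_zero, add_zero]
    refine Finset.sum_congr rfl fun i hi => ?_
    simp only [Finset.mem_range] at hi
    rw [if_neg (by omega), if_neg (by omega)]
    have h1 : k' + 1 - (i + 1) = k' - i := by omega
    have h2 : k' + 1 - i - 1 = k' - i := by omega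
    rw [h1, h2, if_neg (by omega)]
  -- assemble
  rw [hΦ, hη', TLAux.sum_vecMul, Finset.sum_congr rfl key, Finset.sum_add_distrib,
    Finset.sum_sub_distrib, hsums, sub_self, add_zero, Finset.smul_sum]
end

section
/- Consider the M-layer networked sampled-data system with chain inter-layer structure: the state matrix Φ_s ∈ ℝ^{MNn×MNn} is block lower-bidiagonal with diagonal blocks Φ^{K,K} = I_N ⊗ e^{A^K h} + W^K ⊗ 𝓗^K(h) and subdiagonal blocks Φ^{K,K−1} = D^{K,K−1} ⊗ 𝓟^{K,K−1}(h), and the input matrix is Ψ_s = diag(Ψ^{1,1}, …, Ψ^{M,M}) with Ψ^{K,K} = Δ^K ⊗ 𝓑^K(h). Suppose that for every θ ∈ ℂ, every K ∈ {1, …, M}, and every tuple ξ_1, …, ξ_K ∈ ℂ^{1×Nn} with ξ_K ≠ 0, ξ_K(θ I_{Nn} − Φ^{K,K}) = 0, and ξ_j(θ I_{Nn} − Φ^{j,j}) = ξ_{j+1} Φ^{j+1,j} for j = 1, …, K−1, the concatenated row vector [ξ_1 Ψ^{1,1}, …, ξ_K Ψ^{K,K}] is nonzero. Then the discrete-time system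 x(k+1) = Φ_s x(k) + Ψ_s u(k) is controllable. -/
open Matrix
open scoped Kronecker

section PBH
variable {q r : Type*} [Fintype q] [Fintype r] [DecidableEq q] [DecidableEq r]

/-- reachability map at horizon T -/
noncomputable def reachMap (F : Matrix q q ℝ) (G : Matrix q r ℝ) (T : ℕ) :
    (Fin T → r → ℝ) →ₗ[ℝ] (q → ℝ) :=
  ∑ k : Fin T, ((F ^ (T - 1 - (k : ℕ)) * G).mulVecLin).comp (LinearMap.proj k)

lemma reachMap_apply (F : Matrix q q ℝ) (G : Matrix q r ℝ) (T : ℕ) (u : Fin T → r → ℝ) :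
    reachMap F G T u = ∑ k : Fin T, (F ^ (T - 1 - (k : ℕ)) * G).mulVec (u k) := by
  simp [reachMap]

lemma reach_mono (F : Matrix q q ℝ) (G : Matrix q r ℝ) (T : ℕ) :
    LinearMap.range (reachMap F G T) ≤ LinearMap.range (reachMap F G (T + 1)) := by
  rintro x ⟨u, rfl⟩
  refine ⟨Fin.cons 0 u, ?_⟩
  rw [reachMap_apply, reachMap_apply, Fin.sum_univ_succ]
  simp only [Fin.cons_zero, Fin.cons_succ, mulVec_zero, zero_add]
  apply Finset.sum_congr rfl
  intro k _
  have hk : (k : ℕ) < T := k.isLt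
  have he : (T + 1) - 1 - ((Fin.succ k : Fin (T + 1)) : ℕ) = T - 1 - (k : ℕ) := by
    simp only [Fin.val_succ]; omega
  rw [he]

lemma reach_inv (F : Matrix q q ℝ) (G : Matrix q r ℝ) (T : ℕ) (x : q → ℝ)
    (hx : x ∈ LinearMap.range (reachMap F G T)) :
    F.mulVec x ∈ LinearMap.range (reachMap F G (T + 1)) := by
  obtain ⟨u, rfl⟩ := hx
  refine ⟨Fin.snoc u 0, ?_⟩
  rw [reachMap_apply, reachMap_apply, Fin.sum_univ_castSucc]
  simp only [Fin.snoc_last, Fin.snoc_castSucc, mulVec_zero, add_zero]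
  rw [← Matrix.mulVecLin_apply, map_sum]
  apply Finset.sum_congr rfl
  intro k _
  have hk : (k : ℕ) < T := k.isLt
  have he : (T + 1) - 1 - ((Fin.castSucc k : Fin (T + 1)) : ℕ) = (T - 1 - (k : ℕ)) + 1 := by
    simp only [Fin.coe_castSucc]; omega
  rw [he, Matrix.mulVecLin_apply, Matrix.mulVec_mulVec, pow_succ', Matrix.mul_assoc]

lemma reach_G (F : Matrix q q ℝ) (G : Matrix q r ℝ) (v : r → ℝ) :
    G.mulVec v ∈ LinearMap.range (reachMap F G 1) := by
  refine ⟨fun _ => v, ?_⟩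
  rw [reachMap_apply]
  simp

end PBH

section PBH2
variable {q r : Type*} [Fintype q] [Fintype r] [DecidableEq q] [DecidableEq r]

lemma controllable_of_pbh (F : Matrix q q ℝ) (G : Matrix q r ℝ)
    (hpbh : ∀ (θ : ℂ) (η : q → ℂ), η ≠ 0 → η ᵥ* F.map Complex.ofReal = θ • η →
      η ᵥ* G.map Complex.ofReal ≠ 0) :
    Controllable F G := by
  classical
  set R : ℕ →o Submodule ℝ (q → ℝ) :=
    ⟨fun T => LinearMap.range (reachMap F G T),
      monotone_nat_of_le_succ (reach_mono F G)⟩ with hRdef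
  obtain ⟨N₀, hN₀⟩ := monotone_stabilizes_iff_noetherian.mpr inferInstance R
  have hFinv : ∀ x ∈ R N₀, F.mulVec x ∈ R N₀ := by
    intro x hx
    have h1 := reach_inv F G N₀ x hx
    have h2 : R (N₀ + 1) = R N₀ := (hN₀ (N₀ + 1) (Nat.le_succ _)).symm
    rw [← h2]; exact h1
  have hGmem : ∀ v, G.mulVec v ∈ R N₀ := by
    intro v
    have h1 : R 1 ≤ R (N₀ + 1) := R.monotone (by omega)
    have h2 : R (N₀ + 1) = R N₀ := (hN₀ (N₀ + 1) (Nat.le_succ _)).symm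
    rw [← h2]; exact h1 (reach_G F G v)
  by_cases htop : R N₀ = ⊤
  · -- reachable space is everything: construct trajectory
    intro x₀ xf
    have hmem : xf - (F ^ N₀).mulVec x₀ ∈ LinearMap.range (reachMap F G N₀) := by
      show _ ∈ R N₀
      rw [htop]; trivial
    obtain ⟨u, hu⟩ := hmem
    set uu : ℕ → r → ℝ := fun k => if hk : k < N₀ then u ⟨k, hk⟩ else 0 with huu
    set x : ℕ → q → ℝ :=
      fun k => Nat.rec x₀ (fun k xk => F.mulVec xk + G.mulVec (uu k)) k with hx
    refine ⟨N₀, uu, x, rfl, fun k => rfl, ?_⟩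
    have key : ∀ t, x t = (F ^ t).mulVec x₀
        + ∑ k : Fin t, (F ^ (t - 1 - (k : ℕ)) * G).mulVec (uu k) := by
      intro t
      induction t with
      | zero =>
        have h0 : x 0 = x₀ := rfl
        rw [h0]
        simp
      | succ t ih =>
        have hstep : x (t + 1) = F.mulVec (x t) + G.mulVec (uu t) := rfl
        have ea : F.mulVec ((F ^ t).mulVec x₀) = (F ^ (t + 1)).mulVec x₀ := by
          rw [Matrix.mulVec_mulVec, ← pow_succ']
        have es : F.mulVec (∑ k : Fin t, (F ^ (t - 1 - (k : ℕ)) * G).mulVec (uu (k : ℕ)))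
            = ∑ k : Fin t, (F ^ ((t + 1) - 1 - ((Fin.castSucc k : Fin (t + 1)) : ℕ)) * G).mulVec
                (uu ((Fin.castSucc k : Fin (t + 1)) : ℕ)) := by
          rw [← Matrix.mulVecLin_apply F, map_sum]
          apply Finset.sum_congr rfl
          intro k _
          have hk : (k : ℕ) < t := k.isLt
          have he : (t + 1) - 1 - ((Fin.castSucc k : Fin (t + 1)) : ℕ)
              = (t - 1 - (k : ℕ)) + 1 := by
            simp only [Fin.coe_castSucc]; omega
          rw [Matrix.mulVecLin_apply, Matrix.mulVec_mulVec, he, pow_succ', Matrix.mul_assoc,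
            Fin.coe_castSucc]
        have eg : G.mulVec (uu t)
            = (F ^ ((t + 1) - 1 - ((Fin.last t : Fin (t + 1)) : ℕ)) * G).mulVec
                (uu ((Fin.last t : Fin (t + 1)) : ℕ)) := by
          have h0 : (t + 1) - 1 - ((Fin.last t : Fin (t + 1)) : ℕ) = 0 := by
            simp only [Fin.val_last]; omega
          rw [h0, pow_zero, Matrix.one_mul, Fin.val_last]
        rw [hstep, ih, Matrix.mulVec_add, ea, es, eg, Fin.sum_univ_castSucc
          (f := fun k : Fin (t + 1) => (F ^ ((t + 1) - 1 - (k : ℕ)) * G).mulVec (uu (k : ℕ)))]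
        abel
    rw [key N₀]
    have hu' : ∑ k : Fin N₀, (F ^ (N₀ - 1 - (k : ℕ)) * G).mulVec (uu (k : ℕ))
        = xf - (F ^ N₀).mulVec x₀ := by
      rw [← hu, reachMap_apply]
      apply Finset.sum_congr rfl
      intro k _
      congr 1
      simp [huu, k.isLt]
    rw [hu']
    abel
  · exfalso
    -- find a nonzero real functional vanishing on R N₀
    obtain ⟨f, hf0, hfmap⟩ := (R N₀).exists_dual_map_eq_bot_of_lt_top
      (lt_top_iff_ne_top.mpr htop) inferInstance
    have hfker : ∀ x ∈ R N₀, f x = 0 := by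
      intro x hx
      have hmem : f x ∈ Submodule.map f (R N₀) := ⟨x, hx, rfl⟩
      rw [hfmap] at hmem
      simpa using hmem
    set η : q → ℝ := fun i => f (Pi.single i 1) with hη
    have hfx : ∀ x : q → ℝ, f x = ∑ i, x i * η i := by
      intro x
      conv_lhs => rw [show x = ∑ i, Pi.single i (x i) from (Finset.univ_sum_single x).symm]
      rw [map_sum]
      apply Finset.sum_congr rfl
      intro i _
      have hs : Pi.single i (x i) = x i • (Pi.single i 1 : q → ℝ) := by
        funext j
        by_cases hji : j = i
        · subst hji; simp
        · simp [Pi.single_eq_of_ne hji]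
      rw [hs, f.map_smul, smul_eq_mul, hη]
    have hηne : η ≠ 0 := by
      intro hzero
      apply hf0
      apply LinearMap.ext
      intro y
      rw [hfx y, hzero]
      simp
    -- complexified annihilator subspace
    set Vc : Submodule ℂ (q → ℂ) :=
      { carrier := {w | ∀ x ∈ R N₀, ∑ i, w i * (x i : ℂ) = 0}
        add_mem' := by
          intro a b ha hb x hx
          simp only [Pi.add_apply, add_mul, Finset.sum_add_distrib]
          rw [ha x hx, hb x hx, add_zero]
        zero_mem' := by intro x hx; simp
        smul_mem' := by
          intro c a ha x hx
          simp only [Pi.smul_apply, smul_eq_mul, mul_assoc, ← Finset.mul_sum]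
          rw [ha x hx, mul_zero] } with hVc
    have hηc : (fun i => ((η i : ℂ))) ∈ Vc := by
      intro x hx
      have : ((∑ i, x i * η i : ℝ) : ℂ) = 0 := by
        rw [← hfx x, hfker x hx, Complex.ofReal_zero]
      push_cast at this
      rw [← this]
      apply Finset.sum_congr rfl
      intro i _
      ring
    have hηcne : (fun i => ((η i : ℂ))) ≠ 0 := by
      intro hzero
      apply hηne
      ext i
      have := congrFun hzero i
      simpa using this
    have hVinv : ∀ w ∈ Vc, (F.map Complex.ofReal).vecMulLinear w ∈ Vc := by
      intro w hw x hx
      have hterm : ∀ j, ((F.map Complex.ofReal).vecMulLinear w) j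
          = ∑ i, w i * (F i j : ℂ) := by
        intro j
        simp [Matrix.vecMulLinear_apply, Matrix.vecMul, dotProduct]
      calc ∑ j, ((F.map Complex.ofReal).vecMulLinear w) j * (x j : ℂ)
          = ∑ j, ∑ i, w i * (F i j : ℂ) * (x j : ℂ) := by
            apply Finset.sum_congr rfl
            intro j _
            rw [hterm j, Finset.sum_mul]
        _ = ∑ i, w i * ((F.mulVec x i : ℝ) : ℂ) := by
            rw [Finset.sum_comm]
            apply Finset.sum_congr rfl
            intro i _
            simp only [Matrix.mulVec, dotProduct]
            push_cast
            rw [Finset.mul_sum]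
            apply Finset.sum_congr rfl
            intro j _
            ring
        _ = 0 := hw _ (hFinv x hx)
    haveI : Nontrivial Vc := nontrivial_of_ne ⟨_, hηc⟩ 0 (by
      intro hcontra
      exact hηcne (by simpa using congrArg Subtype.val hcontra))
    let f' : Module.End ℂ Vc := ((F.map Complex.ofReal).vecMulLinear).restrict hVinv
    obtain ⟨θ, hθ⟩ := Module.End.exists_eigenvalue f'
    obtain ⟨v, hv⟩ := hθ.exists_hasEigenvector
    have hwne : (v : q → ℂ) ≠ 0 := fun hcontra => hv.2 (Subtype.ext hcontra)
    have heig : (v : q → ℂ) ᵥ* F.map Complex.ofReal = θ • (v : q → ℂ) := by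
      have h1 := hv.apply_eq_smul
      have h2 := congrArg Subtype.val h1
      rw [LinearMap.restrict_coe_apply] at h2
      exact h2
    apply hpbh θ (v : q → ℂ) hwne heig
    funext j
    have hcol := v.2 _ (hGmem (Pi.single j 1))
    have hgv : ∀ i, (G.mulVec (Pi.single j 1)) i = G i j := by
      intro i
      rw [Matrix.mulVec_single]
      simp
    simp only [hgv] at hcol
    show ((v : q → ℂ) ᵥ* G.map Complex.ofReal) j = 0
    simpa [Matrix.vecMul, dotProduct] using hcol

end PBH2


lemma vecMul_smul_one {k : Type*} [Fintype k] [DecidableEq k] (θ : ℂ) (v : k → ℂ) :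
    v ᵥ* (θ • (1 : Matrix k k ℂ)) = θ • v := by
  ext j
  simp [Matrix.vecMul, dotProduct, Matrix.smul_apply, Matrix.one_apply, mul_ite,
    mul_comm, mul_assoc]

lemma vecMul_cmap_apply {k k' : Type*} [Fintype k] (v : k → ℂ) (M : Matrix k k' ℝ) (j : k') :
    (v ᵥ* cmap M) j = ∑ i, v i * (M i j : ℂ) := by
  simp [Matrix.vecMul, dotProduct, cmap]

/-- sufficient controllability condition for the deep networked
sampled-data system with chain inter-layer structure (Theorem 5 in the paper).
Layers are 0-indexed: layer `j` here is layer `j+1` of the paper; `D j` and `P j`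
describe the inter-layer block from layer `j` into layer `j+1`. -/
theorem chainStructure_controllable
    (M N n m p : ℕ) (hM : 2 ≤ M) (hN : 2 ≤ N)
    (A : ℕ → Matrix (Fin n) (Fin n) ℝ) (B : ℕ → Matrix (Fin n) (Fin p) ℝ)
    (C : ℕ → Matrix (Fin m) (Fin n) ℝ) (H : ℕ → Matrix (Fin n) (Fin m) ℝ)
    (P : ℕ → Matrix (Fin n) (Fin m) ℝ)
    (W : ℕ → Matrix (Fin N) (Fin N) ℝ) (D : ℕ → Matrix (Fin N) (Fin N) ℝ)
    (Δ : ℕ → Matrix (Fin N) (Fin N) ℝ)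
    (hΔd : ∀ j, (Δ j).IsDiag) (hΔ01 : ∀ j i, Δ j i i = 0 ∨ Δ j i i = 1)
    (h : ℝ) (hh : 0 < h)
    (Φd Φsub : ℕ → Matrix (Fin N × Fin n) (Fin N × Fin n) ℝ)
    (Ψd : ℕ → Matrix (Fin N × Fin n) (Fin N × Fin p) ℝ)
    (hΦd : ∀ j, Φd j = (1 : Matrix (Fin N) (Fin N) ℝ) ⊗ₖ matExp (h • A j)
        + W j ⊗ₖ (intExp (A j) h * H j * C j))
    (hΦsub : ∀ j, Φsub j = D j ⊗ₖ (intExp (A (j + 1)) h * P j * C j))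
    (hΨd : ∀ j, Ψd j = Δ j ⊗ₖ (intExp (A j) h * B j))
    (Φs : Matrix (Fin M × (Fin N × Fin n)) (Fin M × (Fin N × Fin n)) ℝ)
    (Ψs : Matrix (Fin M × (Fin N × Fin n)) (Fin M × (Fin N × Fin p)) ℝ)
    (hΦs : Φs = Matrix.of fun q r =>
      if (q.1 : ℕ) = (r.1 : ℕ) then Φd (q.1 : ℕ) q.2 r.2
      else if (q.1 : ℕ) = (r.1 : ℕ) + 1 then Φsub (r.1 : ℕ) q.2 r.2 else 0)
    (hΨs : Ψs = Matrix.of fun q r =>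
      if (q.1 : ℕ) = (r.1 : ℕ) then Ψd (q.1 : ℕ) q.2 r.2 else 0)
    -- for every inter-layer coupling chain with nonzero top component,
    -- the concatenation [ξ_1 Ψ^{1,1}, …, ξ_K Ψ^{K,K}] is nonzero
    (hyp : ∀ (θ : ℂ) (K : ℕ), K < M → ∀ ξ : ℕ → Fin N × Fin n → ℂ,
      ξ K ≠ 0 →
      ξ K ᵥ* (θ • (1 : Matrix (Fin N × Fin n) (Fin N × Fin n) ℂ)
          - cmap (Φd K)) = 0 →
      (∀ j, j < K →
        ξ j ᵥ* (θ • (1 : Matrix (Fin N × Fin n) (Fin N × Fin n) ℂ) - cmap (Φd j))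
          = ξ (j + 1) ᵥ* cmap (Φsub j)) →
      ∃ j ≤ K, ξ j ᵥ* cmap (Ψd j) ≠ 0) :
    Controllable Φs Ψs := by
  
  apply controllable_of_pbh
  intro θ η hη0 heig
  intro hcon
  classical
  -- blockwise components of η, extended by zero
  set ξ : ℕ → (Fin N × Fin n) → ℂ :=
    fun K v => if hK : K < M then η (⟨K, hK⟩, v) else 0 with hξ
  have hξb : ∀ (b : Fin M) (w : Fin N × Fin n), ξ (b : ℕ) w = η (b, w) := by
    intro b w
    simp only [hξ, b.isLt, dif_pos, Fin.eta]
  -- the blockwise eigenvector equations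
  have key : ∀ b : Fin M,
      ξ (b : ℕ) ᵥ* (θ • (1 : Matrix (Fin N × Fin n) (Fin N × Fin n) ℂ) - cmap (Φd (b : ℕ)))
        = ξ ((b : ℕ) + 1) ᵥ* cmap (Φsub (b : ℕ)) := by
    intro b
    funext v
    have h1 : (η ᵥ* cmap Φs) (b, v) = θ * η (b, v) := by
      rw [show (cmap Φs) = Φs.map Complex.ofReal from rfl] at *
      rw [heig]
      simp
    have h2 : (η ᵥ* cmap Φs) (b, v)
        = (∑ w, ξ (b : ℕ) w * (Φd (b : ℕ) w v : ℂ))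
          + (∑ w, ξ ((b : ℕ) + 1) w * (Φsub (b : ℕ) w v : ℂ)) := by
      calc (η ᵥ* cmap Φs) (b, v)
          = ∑ a : Fin M, ∑ w, η (a, w) * ((Φs ((a, w)) (b, v) : ℝ) : ℂ) := by
            show ∑ x : Fin M × (Fin N × Fin n), η x * _ = _
            rw [Fintype.sum_prod_type]
            rfl
        _ = ∑ a : Fin M,
            ((if (a : ℕ) = (b : ℕ) then ∑ w, η (a, w) * (Φd (b : ℕ) w v : ℂ) else 0)
              + (if (a : ℕ) = (b : ℕ) + 1 then ∑ w, η (a, w) * (Φsub (b : ℕ) w v : ℂ)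
                  else 0)) := by
            apply Finset.sum_congr rfl
            intro a _
            by_cases hab : (a : ℕ) = (b : ℕ)
            · have hab' : ¬((a : ℕ) = (b : ℕ) + 1) := by omega
              rw [if_pos hab, if_neg hab', add_zero]
              apply Finset.sum_congr rfl
              intro w _
              rw [hΦs]
              simp only [Matrix.of_apply]
              rw [if_pos hab, hab]
            · by_cases hab' : (a : ℕ) = (b : ℕ) + 1
              · rw [if_neg hab, if_pos hab', zero_add]
                apply Finset.sum_congr rfl
                intro w _
                rw [hΦs]
                simp only [Matrix.of_apply]
                rw [if_neg hab, if_pos hab']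
              · rw [if_neg hab, if_neg hab', add_zero]
                apply Finset.sum_eq_zero
                intro w _
                rw [hΦs]
                simp only [Matrix.of_apply]
                rw [if_neg hab, if_neg hab', Complex.ofReal_zero, mul_zero]
        _ = (∑ w, ξ (b : ℕ) w * (Φd (b : ℕ) w v : ℂ))
            + (∑ w, ξ ((b : ℕ) + 1) w * (Φsub (b : ℕ) w v : ℂ)) := by
            rw [Finset.sum_add_distrib]
            congr 1
            · rw [Finset.sum_eq_single b]
              · rw [if_pos rfl]
                apply Finset.sum_congr rfl
                intro w _
                rw [hξb]
              · intro a _ hab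
                rw [if_neg (fun hc => hab (Fin.val_injective hc))]
              · intro hb
                exact absurd (Finset.mem_univ b) hb
            · by_cases hb : (b : ℕ) + 1 < M
              · rw [Finset.sum_eq_single (⟨(b : ℕ) + 1, hb⟩ : Fin M)]
                · rw [if_pos rfl]
                  apply Finset.sum_congr rfl
                  intro w _
                  congr 1
                  simp only [hξ, hb, dif_pos]
                · intro a _ hab
                  rw [if_neg (fun hc => hab (by exact Fin.val_injective hc))]
                · intro hb'
                  exact absurd (Finset.mem_univ _) hb'
              · rw [Finset.sum_eq_zero]
                · symm
                  apply Finset.sum_eq_zero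
                  intro w _
                  have hz : ξ ((b : ℕ) + 1) w = 0 := dif_neg hb
                  rw [hz, zero_mul]
                · intro a _
                  rw [if_neg]
                  have := a.isLt
                  omega
    have hL : (ξ (b : ℕ) ᵥ* (θ • (1 : Matrix (Fin N × Fin n) (Fin N × Fin n) ℂ)
        - cmap (Φd (b : ℕ)))) v
        = θ * ξ (b : ℕ) v - ∑ w, ξ (b : ℕ) w * (Φd (b : ℕ) w v : ℂ) := by
      rw [Matrix.vecMul_sub, vecMul_smul_one]
      rw [show ((θ • ξ (b : ℕ) - ξ (b : ℕ) ᵥ* cmap (Φd (b : ℕ))) v)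
        = θ • ξ (b : ℕ) v - (ξ (b : ℕ) ᵥ* cmap (Φd (b : ℕ))) v from rfl]
      rw [vecMul_cmap_apply, smul_eq_mul]
    have hR : (ξ ((b : ℕ) + 1) ᵥ* cmap (Φsub (b : ℕ))) v
        = ∑ w, ξ ((b : ℕ) + 1) w * (Φsub (b : ℕ) w v : ℂ) := vecMul_cmap_apply _ _ _
    rw [hL, hR]
    have h3 := h2.symm.trans h1
    rw [← hξb b v] at h3
    linear_combination h3.symm
  -- the blockwise input equations
  have hpsi : ∀ b : Fin M, ξ (b : ℕ) ᵥ* cmap (Ψd (b : ℕ)) = 0 := by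
    intro b
    funext v
    have h0 : (η ᵥ* cmap Ψs) (b, v) = 0 := by
      rw [show cmap Ψs = Ψs.map Complex.ofReal from rfl, hcon]
      rfl
    have h2 : (η ᵥ* cmap Ψs) (b, v) = ∑ w, ξ (b : ℕ) w * (Ψd (b : ℕ) w v : ℂ) := by
      calc (η ᵥ* cmap Ψs) (b, v)
          = ∑ a : Fin M, ∑ w, η (a, w) * ((Ψs ((a, w)) (b, v) : ℝ) : ℂ) := by
            show ∑ x : Fin M × (Fin N × Fin n), η x * _ = _
            rw [Fintype.sum_prod_type]
            rfl
        _ = ∑ a : Fin M, (if (a : ℕ) = (b : ℕ)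
              then ∑ w, η (a, w) * (Ψd (b : ℕ) w v : ℂ) else 0) := by
            apply Finset.sum_congr rfl
            intro a _
            by_cases hab : (a : ℕ) = (b : ℕ)
            · rw [if_pos hab]
              apply Finset.sum_congr rfl
              intro w _
              rw [hΨs]
              simp only [Matrix.of_apply]
              rw [if_pos hab, hab]
            · rw [if_neg hab]
              apply Finset.sum_eq_zero
              intro w _
              rw [hΨs]
              simp only [Matrix.of_apply]
              rw [if_neg hab, Complex.ofReal_zero, mul_zero]
        _ = ∑ w, ξ (b : ℕ) w * (Ψd (b : ℕ) w v : ℂ) := by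
            rw [Finset.sum_eq_single b]
            · rw [if_pos rfl]
              apply Finset.sum_congr rfl
              intro w _
              rw [hξb]
            · intro a _ hab
              rw [if_neg (fun hc => hab (Fin.val_injective hc))]
            · intro hb
              exact absurd (Finset.mem_univ b) hb
    rw [vecMul_cmap_apply, ← h2, h0]
    rfl
  -- pick the largest nonvanishing block
  obtain ⟨x0, hx0⟩ := Function.ne_iff.mp hη0
  have hξa₀ : ξ ((x0.1 : Fin M) : ℕ) ≠ 0 := by
    intro hz
    apply hx0
    have := congrFun hz x0.2
    rw [hξb] at this
    simpa using this
  set K := Nat.findGreatest (fun K => ξ K ≠ 0) (M - 1) with hK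
  have hKM : K < M := lt_of_le_of_lt (Nat.findGreatest_le _) (by omega)
  have hKspec : ξ K ≠ 0 := by
    rw [hK]
    exact Nat.findGreatest_spec (P := fun K => ξ K ≠ 0) (n := M - 1)
      (m := ((x0.1 : Fin M) : ℕ)) (by have := (x0.1).isLt; omega) hξa₀
  have hgt : ∀ j, K < j → ξ j = 0 := by
    intro j hj
    by_cases hjM : j < M
    · by_contra hne
      exact Nat.findGreatest_is_greatest hj (by omega) hne
    · funext w
      exact dif_neg hjM
  have htopeq : ξ K ᵥ* (θ • (1 : Matrix (Fin N × Fin n) (Fin N × Fin n) ℂ)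
      - cmap (Φd K)) = 0 := by
    have hk := key ⟨K, hKM⟩
    rw [hk, hgt (K + 1) (by omega), Matrix.zero_vecMul]
  have hchain : ∀ j, j < K →
      ξ j ᵥ* (θ • (1 : Matrix (Fin N × Fin n) (Fin N × Fin n) ℂ) - cmap (Φd j))
        = ξ (j + 1) ᵥ* cmap (Φsub j) :=
    fun j hj => key ⟨j, by omega⟩
  obtain ⟨j, hjK, hjne⟩ := hyp θ K hKM ξ hKspec htopeq hchain
  exact hjne (hpsi ⟨j, by omega⟩)
end

section
/- Consider the two-layer drive-response networked sampled-data system under the Multi-scale sampling pattern with integer l ≥ 1 (the drive layer sampled with period l·h, the response layer with period h): define Φ̃^{1,1} = I_N ⊗ e^{A^1 l h} + W^1 ⊗ 𝓗^1(lh), Ψ̃^{1,1} = Δ^1 ⊗ 𝓑^1(lh), Φ̃^{2,2} = (Φ^{2,2})^l, Φ̃^{2,1} = (Σ_{r=0}^{l−1} (Φ^{2,2})^r)·Φ^{2,1}, Ψ̃^{2,2} = [(Φ^{2,2})^{l−1} Ψ^{2,2}, …, Φ^{2,2} Ψ^{2,2}, Ψ^{2,2}], Φ̃_s = [[Φ̃^{1,1},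 0], [Φ̃^{2,1}, Φ̃^{2,2}]], Ψ̃_s = diag(Ψ̃^{1,1}, Ψ̃^{2,2}). Suppose: (1) for every μ ∈ ℂ and every nonzero row vector η ∈ ℂ^{1×Nn} with η Φ̃^{1,1} = μ η, one has η(Δ^1 ⊗ 𝓑^1(lh)) ≠ 0; and (2) for every μ ∈ ℂ, every nonzero η ∈ ℂ^{1×Nn} with η (Φ^{2,2})^l = μ η, and every ξ ∈ ℂ^{1×Nn} with ξ(μ I_{Nn} − Φ̃^{1,1}) = η Φ̃^{2,1}, the concatenated row vector [ξ(Δ^1 ⊗ 𝓑^1(lh)), η(Δ^2 ⊗ 𝓑^2(h))] is nonzero. Then the discrete-time system x(k+1) = Φ̃_s x(k) + Ψ̃_s u(k) is controllable. -/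
open Matrix
open scoped Kronecker

section Aux

lemma aux_cmap_mul {a b c : Type*} [Fintype b] (M : Matrix a b ℝ) (N : Matrix b c ℝ) :
    cmap (M * N) = cmap M * cmap N :=
  Matrix.map_mul (f := Complex.ofRealHom)

lemma aux_cmap_vecMul {a b : Type*} [Fintype a] (w : a → ℝ) (M : Matrix a b ℝ) (j : b) :
    ((fun i => (w i : ℂ)) ᵥ* cmap M) j = ((w ᵥ* M) j : ℂ) := by
  simp [Matrix.vecMul, dotProduct, cmap]

lemma aux_exists_ann {q : Type*} [Fintype q] [DecidableEq q] {S : Submodule ℝ (q → ℝ)}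
    (hS : S ≠ ⊤) : ∃ w : q → ℝ, w ≠ 0 ∧ ∀ y ∈ S, w ⬝ᵥ y = 0 := by
  have hlt : S < ⊤ := hS.lt_top
  have := (Submodule.Quotient.nontrivial_iff (p := S)).mpr hS
  obtain ⟨x, hx⟩ := exists_ne (0 : (q → ℝ) ⧸ S)
  have hφ : ¬ ∀ φ : Module.Dual ℝ ((q → ℝ) ⧸ S), φ x = 0 := by
    rw [Module.forall_dual_apply_eq_zero_iff]; exact hx
  push_neg at hφ
  obtain ⟨φ, hφ⟩ := hφ
  set g : (q → ℝ) →ₗ[ℝ] ℝ := φ.comp S.mkQ with hg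
  refine ⟨fun i => g (fun j => if i = j then 1 else 0), ?_, ?_⟩
  · intro hw0
    obtain ⟨v, rfl⟩ := S.mkQ_surjective x
    have : g v ≠ 0 := hφ
    apply this
    rw [LinearMap.pi_apply_eq_sum_univ g v]
    have : ∀ i, g (fun j => if i = j then 1 else 0) = 0 := fun i => congrFun hw0 i
    simp [this]
  · intro y hy
    have hgy : g y = 0 := by
      have : S.mkQ y = 0 := (Submodule.Quotient.mk_eq_zero S).mpr hy
      simp [hg, this]
    rw [LinearMap.pi_apply_eq_sum_univ g y] at hgy
    simpa [dotProduct, mul_comm, smul_eq_mul] using hgy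

lemma aux_pbh_span {q r : Type*} [Fintype q] [DecidableEq q] [Fintype r] [DecidableEq r]
    (F : Matrix q q ℝ) (G : Matrix q r ℝ)
    (hpbh : ∀ (μ : ℂ) (η : q → ℂ), η ≠ 0 → η ᵥ* cmap F = μ • η → η ᵥ* cmap G ≠ 0) :
    (⨆ k : ℕ, LinearMap.range (Matrix.mulVecLin (F ^ k * G))) = ⊤ := by
  by_contra hS
  obtain ⟨w, hw0, hwann⟩ := aux_exists_ann hS
  have hw : ∀ k : ℕ, w ᵥ* (F ^ k * G) = 0 := by
    intro k
    funext j
    have h1 : ((F ^ k * G) *ᵥ Pi.single j 1) ∈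
        ⨆ k : ℕ, LinearMap.range (Matrix.mulVecLin (F ^ k * G)) :=
      Submodule.mem_iSup_of_mem k ⟨Pi.single j 1, rfl⟩
    have h2 := hwann _ h1
    rw [dotProduct_mulVec] at h2
    simpa using h2
  set Vc : Submodule ℂ (q → ℂ) :=
    ⨅ k : ℕ, LinearMap.ker (Matrix.mulVecLin ((cmap (F ^ k * G))ᵀ)) with hVc
  have hmem : ∀ z, z ∈ Vc ↔ ∀ k : ℕ, z ᵥ* cmap (F ^ k * G) = 0 := by
    intro z
    simp [hVc, Submodule.mem_iInf, LinearMap.mem_ker, Matrix.mulVecLin_apply,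
      Matrix.mulVec_transpose]
  have hwc : (fun i => (w i : ℂ)) ∈ Vc := by
    rw [hmem]; intro k; funext j
    rw [aux_cmap_vecMul, hw k]; simp
  have hinv : ∀ z ∈ Vc, (Matrix.mulVecLin ((cmap F)ᵀ)) z ∈ Vc := by
    intro z hz
    rw [hmem] at hz ⊢
    intro k
    have e1 : ((cmap F)ᵀ *ᵥ z) ᵥ* cmap (F ^ k * G) = z ᵥ* ((cmap F)ᵀᵀ * cmap (F ^ k * G)) :=
      Matrix.vecMul_mulVec _ _ _
    have e2 : F * (F ^ k * G) = F ^ (k + 1) * G := by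
      rw [pow_succ']; exact (Matrix.mul_assoc F (F ^ k) G).symm
    rw [Matrix.mulVecLin_apply, e1, Matrix.transpose_transpose, ← aux_cmap_mul, e2]
    exact hz (k + 1)
  have hVne : (fun i => (w i : ℂ)) ≠ (0 : q → ℂ) := by
    intro h0; apply hw0; funext i
    simpa using congrFun h0 i
  haveI : Nontrivial Vc := nontrivial_of_ne ⟨_, hwc⟩ 0 (by simpa [Subtype.ext_iff] using hVne)
  set e : Module.End ℂ Vc := (Matrix.mulVecLin ((cmap F)ᵀ)).restrict hinv with he
  obtain ⟨μ, hμ⟩ := Module.End.exists_eigenvalue e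
  obtain ⟨v, hv⟩ := hμ.exists_hasEigenvector
  have hη : (v : q → ℂ) ᵥ* cmap F = μ • (v : q → ℂ) := by
    have h3 := congrArg Subtype.val hv.apply_eq_smul
    simpa [he, LinearMap.restrict_coe_apply, Matrix.mulVecLin_apply,
      Matrix.mulVec_transpose] using h3
  have hne : (v : q → ℂ) ≠ 0 := by
    intro h0
    exact hv.right (Subtype.ext h0)
  refine hpbh μ _ hne hη ?_
  have h4 := (hmem _).mp v.2 0
  simpa [pow_zero, one_mul] using h4

lemma aux_span_controllable {q r : Type*} [Fintype q] [DecidableEq q] [Fintype r] [DecidableEq r]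
    (F : Matrix q q ℝ) (G : Matrix q r ℝ)
    (hspan : (⨆ k : ℕ, LinearMap.range (Matrix.mulVecLin (F ^ k * G))) = ⊤) :
    Controllable F G := by
  classical
  set L : ℕ → ((ℕ → r → ℝ) →ₗ[ℝ] (q → ℝ)) := fun T =>
    { toFun := fun u => ∑ k ∈ Finset.range T, (F ^ k * G) *ᵥ u k
      map_add' := by
        intro u v
        simp [Matrix.mulVec_add, Finset.sum_add_distrib]
      map_smul' := by
        intro c u
        simp [Matrix.mulVec_smul, Finset.smul_sum] } with hL
  have hLapp : ∀ T u, L T u = ∑ k ∈ Finset.range T, (F ^ k * G) *ᵥ u k := fun _ _ => rfl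
  have hmono : Monotone fun T => LinearMap.range (L T) := by
    intro T T' hTT'
    rintro y ⟨u, rfl⟩
    refine ⟨fun k => if k < T then u k else 0, ?_⟩
    rw [hLapp, hLapp]
    rw [← Finset.sum_subset (Finset.range_subset_range.mpr hTT')]
    · exact Finset.sum_congr rfl fun k hk => by rw [if_pos (Finset.mem_range.mp hk)]
    · intro k _ hk
      rw [if_neg (by simpa using hk), Matrix.mulVec_zero]
  have hle : (⊤ : Submodule ℝ (q → ℝ)) ≤ ⨆ T, LinearMap.range (L T) := by
    rw [← hspan]
    refine iSup_le fun k => le_trans ?_ (le_iSup (fun T => LinearMap.range (L T)) (k + 1))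
    rintro y ⟨u, rfl⟩
    refine ⟨fun j => if j = k then u else 0, ?_⟩
    rw [hLapp, Finset.sum_eq_single k]
    · simp
    · intro j _ hj
      rw [if_neg hj, Matrix.mulVec_zero]
    · intro hk
      exact absurd (Finset.mem_range.mpr (Nat.lt_succ_self k)) hk
  have hfg : (⊤ : Submodule ℝ (q → ℝ)).FG := Module.Finite.fg_top
  obtain ⟨s, hs⟩ := CompleteLattice.IsCompactElement.exists_finset_of_le_iSup
    (Submodule ℝ (q → ℝ)) ((Submodule.fg_iff_compact _).mp hfg)
    (fun T => LinearMap.range (L T)) hle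
  set T := s.sup id with hT
  have htop : (⊤ : Submodule ℝ (q → ℝ)) ≤ LinearMap.range (L T) := by
    refine hs.trans ?_
    refine iSup_le fun i => iSup_le fun hi => ?_
    exact hmono (Finset.le_sup (f := id) hi)
  intro x₀ xf
  obtain ⟨v, hv⟩ := htop (Submodule.mem_top (x := xf - F ^ T *ᵥ x₀))
  rw [hLapp] at hv
  set u : ℕ → r → ℝ := fun i => v (T - 1 - i) with hu
  set x : ℕ → q → ℝ := fun k => Nat.rec x₀ (fun k xk => F *ᵥ xk + G *ᵥ u k) k with hx
  refine ⟨T, u, x, rfl, fun k => rfl, ?_⟩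
  have key : ∀ j, x j = F ^ j *ᵥ x₀ + ∑ i ∈ Finset.range j, (F ^ (j - 1 - i) * G) *ᵥ u i := by
    intro j
    induction j with
    | zero => simp [hx]
    | succ j ih =>
      have hstep : x (j + 1) = F *ᵥ x j + G *ᵥ u j := rfl
      rw [hstep, ih, Matrix.mulVec_add, Finset.sum_range_succ]
      have hFsum : F *ᵥ (∑ i ∈ Finset.range j, (F ^ (j - 1 - i) * G) *ᵥ u i)
          = ∑ i ∈ Finset.range j, (F ^ (j + 1 - 1 - i) * G) *ᵥ u i := by
        rw [show F *ᵥ (∑ i ∈ Finset.range j, (F ^ (j - 1 - i) * G) *ᵥ u i)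
            = ∑ i ∈ Finset.range j, F *ᵥ ((F ^ (j - 1 - i) * G) *ᵥ u i) from
          map_sum (Matrix.mulVecLin F) _ _]
        refine Finset.sum_congr rfl fun i hi => ?_
        have he : j + 1 - 1 - i = (j - 1 - i) + 1 := by
          have := Finset.mem_range.mp hi; omega
        rw [Matrix.mulVec_mulVec, he, pow_succ', Matrix.mul_assoc]
      rw [hFsum, Matrix.mulVec_mulVec]
      have : j + 1 - 1 - j = 0 := by omega
      rw [this, pow_zero, Matrix.one_mul, ← pow_succ']
      abel
  rw [key T]
  have hreflect : ∑ i ∈ Finset.range T, (F ^ (T - 1 - i) * G) *ᵥ u i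
      = ∑ k ∈ Finset.range T, (F ^ k * G) *ᵥ v k := by
    rw [hu]
    exact Finset.sum_range_reflect (fun k => (F ^ k * G) *ᵥ v k) T
  rw [hreflect, hv]
  abel

lemma aux_vecMul_smul_one_sub {k : Type*} [Fintype k] [DecidableEq k]
    (μ : ℂ) (A : Matrix k k ℂ) (x : k → ℂ) :
    x ᵥ* (μ • (1 : Matrix k k ℂ) - A) = μ • x - x ᵥ* A := by
  rw [Matrix.vecMul_sub]
  congr 1
  funext j
  simp [Matrix.vecMul, dotProduct, Matrix.smul_apply, Matrix.one_apply,
    mul_ite, mul_comm, Finset.sum_ite_eq]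

end Aux

/-- sufficient controllability condition for the two-layer drive-response
networked sampled-data system under the Multi-scale sampling pattern (Corollary 5 in the
paper): the drive layer is sampled with period `l·h`, the response layer with period `h`. -/
theorem multiScale_controllable
    (N n m p l : ℕ) (hl : 1 ≤ l)
    (A1 A2 : Matrix (Fin n) (Fin n) ℝ) (B1 B2 : Matrix (Fin n) (Fin p) ℝ)
    (C1 C2 : Matrix (Fin m) (Fin n) ℝ) (H1 H2 : Matrix (Fin n) (Fin m) ℝ)
    (W1 W2 : Matrix (Fin N) (Fin N) ℝ) (Δ1 Δ2 : Matrix (Fin N) (Fin N) ℝ)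
    (hΔ1d : Δ1.IsDiag) (hΔ2d : Δ2.IsDiag)
    (hΔ1v : ∀ i, Δ1 i i = 0 ∨ Δ1 i i = 1) (hΔ2v : ∀ i, Δ2 i i = 0 ∨ Δ2 i i = 1)
    (D21 : Matrix (Fin N) (Fin N) ℝ) (P21 : Matrix (Fin n) (Fin m) ℝ)
    (h : ℝ) (hh : 0 < h)
    (Φ22 Φ21 : Matrix (Fin N × Fin n) (Fin N × Fin n) ℝ)
    (Ψ22 : Matrix (Fin N × Fin n) (Fin N × Fin p) ℝ)
    (hΦ22 : Φ22 = (1 : Matrix (Fin N) (Fin N) ℝ) ⊗ₖ matExp (h • A2)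
        + W2 ⊗ₖ (intExp A2 h * H2 * C2))
    (hΦ21 : Φ21 = D21 ⊗ₖ (intExp A2 h * P21 * C1))
    (hΨ22 : Ψ22 = Δ2 ⊗ₖ (intExp A2 h * B2))
    -- lifted matrices
    (Φt11 Φt21 : Matrix (Fin N × Fin n) (Fin N × Fin n) ℝ)
    (Ψt11 : Matrix (Fin N × Fin n) (Fin N × Fin p) ℝ)
    (Ψt22 : Matrix (Fin N × Fin n) (Fin l × (Fin N × Fin p)) ℝ)
    (hΦt11 : Φt11 = (1 : Matrix (Fin N) (Fin N) ℝ) ⊗ₖ matExp (((l : ℝ) * h) • A1)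
        + W1 ⊗ₖ (intExp A1 ((l : ℝ) * h) * H1 * C1))
    (hΦt21 : Φt21 = (∑ r ∈ Finset.range l, Φ22 ^ r) * Φ21)
    (hΨt11 : Ψt11 = Δ1 ⊗ₖ (intExp A1 ((l : ℝ) * h) * B1))
    (hΨt22 : Ψt22 = Matrix.of fun a q => ((Φ22 ^ (l - 1 - (q.1 : ℕ))) * Ψ22) a q.2)
    -- condition (1)
    (cond1 : ∀ (μ : ℂ) (η : Fin N × Fin n → ℂ), η ≠ 0 →
      η ᵥ* cmap Φt11 = μ • η → η ᵥ* cmap Ψt11 ≠ 0)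
    -- condition (2)
    (cond2 : ∀ (μ : ℂ) (η ξ : Fin N × Fin n → ℂ), η ≠ 0 →
      η ᵥ* cmap (Φ22 ^ l) = μ • η →
      ξ ᵥ* (μ • (1 : Matrix (Fin N × Fin n) (Fin N × Fin n) ℂ) - cmap Φt11)
        = η ᵥ* cmap Φt21 →
      Sum.elim (ξ ᵥ* cmap Ψt11) (η ᵥ* cmap Ψ22) ≠ 0) :
    Controllable (Matrix.fromBlocks Φt11 0 Φt21 (Φ22 ^ l))
      (Matrix.fromBlocks Ψt11 0 0 Ψt22) := by
  apply aux_span_controllable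
  apply aux_pbh_span
  intro μ η hη hEig
  set η1 : Fin N × Fin n → ℂ := η ∘ Sum.inl with hη1
  set η2 : Fin N × Fin n → ℂ := η ∘ Sum.inr with hη2
  have hηelim : η = Sum.elim η1 η2 := (Sum.elim_comp_inl_inr η).symm
  have hFc : cmap (Matrix.fromBlocks Φt11 0 Φt21 (Φ22 ^ l))
      = Matrix.fromBlocks (cmap Φt11) 0 (cmap Φt21) (cmap (Φ22 ^ l)) := by
    unfold cmap
    rw [Matrix.fromBlocks_map]
    simp only [Matrix.map_zero _ Complex.ofReal_zero]
  have hGc : cmap (Matrix.fromBlocks Ψt11 0 0 Ψt22)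
      = Matrix.fromBlocks (cmap Ψt11) 0 0 (cmap Ψt22) := by
    unfold cmap
    rw [Matrix.fromBlocks_map]
    simp only [Matrix.map_zero _ Complex.ofReal_zero]
  rw [hηelim, hFc, Matrix.vecMul_fromBlocks] at hEig
  have h1 : η1 ᵥ* cmap Φt11 + η2 ᵥ* cmap Φt21 = μ • η1 := by
    funext j
    simpa using congrFun hEig (Sum.inl j)
  have h2 : η2 ᵥ* cmap (Φ22 ^ l) = μ • η2 := by
    funext j
    simpa using congrFun hEig (Sum.inr j)
  rw [hηelim, hGc, Matrix.vecMul_fromBlocks]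
  simp only [Matrix.vecMul_zero, add_zero, zero_add]
  by_cases hη2 : η2 = 0
  · have hη1 : η1 ≠ 0 := by
      intro h0
      apply hη
      rw [hηelim, h0, hη2]
      funext a
      cases a <;> rfl
    have hEq : η1 ᵥ* cmap Φt11 = μ • η1 := by
      rw [← h1, hη2, Matrix.zero_vecMul, add_zero]
    intro h0
    refine cond1 μ η1 hη1 hEq ?_
    funext j
    exact congrFun h0 (Sum.inl j)
  · have hξ : η1 ᵥ* (μ • (1 : Matrix (Fin N × Fin n) (Fin N × Fin n) ℂ) - cmap Φt11)
        = η2 ᵥ* cmap Φt21 := by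
      rw [aux_vecMul_smul_one_sub, ← h1]
      abel
    have hc2 := cond2 μ η2 η1 hη2 h2 hξ
    rw [Function.ne_iff] at hc2
    obtain ⟨c, hc⟩ := hc2
    rw [Function.ne_iff]
    cases c with
    | inl j =>
        exact ⟨Sum.inl j, by simpa using hc⟩
    | inr j =>
        refine ⟨Sum.inr (⟨l - 1, by omega⟩, j), ?_⟩
        have hcol : ∀ a, Ψt22 a (⟨l - 1, by omega⟩, j) = Ψ22 a j := by
          intro a
          rw [hΨt22]
          simp
        have hval : (η2 ᵥ* cmap Ψt22) (⟨l - 1, by omega⟩, j) = (η2 ᵥ* cmap Ψ22) j := by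
          simp [Matrix.vecMul, dotProduct, cmap, Matrix.map_apply, hcol]
        simpa [hval] using hc
end
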